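/- arXiv:2210.17182 — 4 statements merged into one kernel-verified Lean document; each statement's English description precedes it below -/
import Mathlib

section
/- Landen's trilogarithm functional equation: for every real number z with 0 < z < 1/2, one has Li₃(z) + Li₃(1−z) + Li₃(z/(z−1)) = ζ(3) + ζ(2)·log(1−z) − (1/2)·log(z)·log²(1−z) + (1/6)·log³(1−z). (Note that for 0 < z < 1/2 the arguments z, 1−z lie in (0,1) and z/(z−1) lies in (−1,0), so all three polylogarithm series converge absolutely.) -/
open Real Set Filter Topology

/-- The polylogarithm `Li_k(z) = ∑_{n=1}^∞ zⁿ/n^k` for `|z| < 1`. -/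
noncomputable def Li (k : ℕ) (z : ℝ) : ℝ := ∑' n : ℕ, z ^ (n + 1) / ((n : ℝ) + 1) ^ k

/-- `ζ(k) = ∑_{n=1}^∞ 1/n^k` for `k ≥ 2`. -/
noncomputable def zeta (k : ℕ) : ℝ := ∑' n : ℕ, 1 / ((n : ℝ) + 1) ^ k

lemma summable_aux (k : ℕ) {z : ℝ} (h : |z| < 1) :
    Summable (fun n : ℕ => z ^ n / ((n : ℝ) + 1) ^ k) := by
  apply Summable.of_norm
  refine Summable.of_nonneg_of_le (fun n => norm_nonneg _) (fun n => ?_)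
    (summable_geometric_of_lt_one (abs_nonneg z) h)
  rw [norm_div, norm_pow, norm_pow, Real.norm_eq_abs z]
  have h1 : (1:ℝ) ≤ ‖(n:ℝ) + 1‖ ^ k := by
    apply one_le_pow₀
    rw [Real.norm_eq_abs, abs_of_nonneg (by positivity)]
    linarith [Nat.cast_nonneg (α := ℝ) n]
  calc |z| ^ n / ‖(n:ℝ) + 1‖ ^ k ≤ |z| ^ n / 1 :=
        div_le_div_of_nonneg_left (by positivity) one_pos h1 |>.trans_eq rfl
    _ = |z| ^ n := div_one _

lemma summable_Li (k : ℕ) {z : ℝ} (h : |z| < 1) :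
    Summable (fun n : ℕ => z ^ (n + 1) / ((n : ℝ) + 1) ^ k) := by
  have := (summable_aux k h).mul_left z
  refine this.congr fun n => ?_
  rw [mul_div_assoc']
  ring_nf

lemma summable_one_div_shift {k : ℕ} (hk : 2 ≤ k) :
    Summable (fun n : ℕ => 1 / ((n : ℝ) + 1) ^ k) := by
  have : Summable (fun n : ℕ => 1 / ((n : ℝ)) ^ k) := by
    rw [summable_one_div_nat_pow]; exact hk
  have := (summable_nat_add_iff 1).2 this
  refine this.congr fun n => ?_
  push_cast
  ring_nf

lemma hasDerivAt_Li_aux (k : ℕ) {z : ℝ} (h : |z| < 1) :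
    HasDerivAt (Li (k + 1)) (∑' n : ℕ, z ^ n / ((n : ℝ) + 1) ^ k) z := by
  set r : ℝ := (1 + |z|) / 2 with hrdef
  have hr0 : 0 ≤ r := by positivity
  have hr1 : r < 1 := by rw [hrdef]; linarith
  have hzr : |z| < r := by rw [hrdef]; linarith
  have hmem : z ∈ Metric.ball (0 : ℝ) r := by
    simpa [Metric.mem_ball, Real.dist_eq] using hzr
  have H := hasDerivAt_tsum_of_isPreconnected
    (y₀ := (0:ℝ))
    (g := fun (n : ℕ) (y : ℝ) => y ^ (n + 1) / ((n : ℝ) + 1) ^ (k + 1))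
    (g' := fun (n : ℕ) (y : ℝ) => y ^ n / ((n : ℝ) + 1) ^ k)
    (summable_geometric_of_lt_one hr0 hr1) Metric.isOpen_ball
    (convex_ball (0:ℝ) r).isPreconnected
    (fun n y _ => by
      have hne : ((n : ℝ) + 1) ≠ 0 := by positivity
      have := (hasDerivAt_pow (n + 1) y).div_const (((n : ℝ) + 1) ^ (k + 1))
      refine this.congr_deriv ?_
      push_cast
      field_simp
      ring)
    (fun n y hy => by
      have hy' : |y| ≤ r := by
        simp only [Metric.mem_ball, Real.dist_eq, sub_zero] at hy
        exact hy.le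
      rw [Real.norm_eq_abs, abs_div, abs_pow, abs_pow]
      have h1 : (1:ℝ) ≤ |(n:ℝ) + 1| ^ k := by
        apply one_le_pow₀
        rw [abs_of_nonneg (by positivity)]
        linarith [Nat.cast_nonneg (α := ℝ) n]
      calc |y| ^ n / |(n:ℝ) + 1| ^ k ≤ |y| ^ n / 1 :=
            div_le_div_of_nonneg_left (by positivity) one_pos h1
        _ = |y| ^ n := div_one _
        _ ≤ r ^ n := pow_le_pow_left₀ (abs_nonneg y) hy' n)
    (Metric.mem_ball_self (lt_of_le_of_lt (abs_nonneg z) hzr))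
    (by
      refine Summable.congr summable_zero fun n => ?_
      simp)
    hmem
  exact H

lemma hasDerivAt_Li (k : ℕ) {z : ℝ} (h : |z| < 1) (hz : z ≠ 0) :
    HasDerivAt (Li (k + 1)) (Li k z / z) z := by
  have := hasDerivAt_Li_aux k h
  convert this using 1
  rw [Li, ← tsum_div_const]
  refine tsum_congr fun n => ?_
  rw [pow_succ']
  field_simp

lemma Li_one_eq {z : ℝ} (h : |z| < 1) : Li 1 z = -Real.log (1 - z) := by
  rw [Li, ← (Real.hasSum_pow_div_log_of_abs_lt_one h).tsum_eq]
  exact tsum_congr fun n => by rw [pow_one]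

lemma Li_zero (k : ℕ) : Li k 0 = 0 := by
  simp [Li]

lemma Li_one (k : ℕ) : Li k 1 = zeta k := by
  simp [Li, zeta]

lemma continuousOn_Li {k : ℕ} (hk : 2 ≤ k) : ContinuousOn (Li k) (Icc (-1 : ℝ) 1) := by
  rw [show Li k = fun z => ∑' n : ℕ, z ^ (n + 1) / ((n : ℝ) + 1) ^ k from rfl]
  refine continuousOn_tsum (fun n => (Continuous.continuousOn (by continuity)))
    (summable_one_div_shift hk) (fun n x hx => ?_)
  have hx1 : |x| ≤ 1 := abs_le.2 ⟨hx.1, hx.2⟩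
  rw [Real.norm_eq_abs, abs_div, abs_pow, abs_pow, abs_of_nonneg (show (0:ℝ) ≤ (n:ℝ)+1 by positivity)]
  have h2 : (0:ℝ) < ((n:ℝ) + 1) ^ k := by positivity
  rw [div_le_div_iff₀ h2 h2, one_mul]
  have : |x| ^ (n+1) ≤ 1 := pow_le_one₀ (abs_nonneg x) hx1
  nlinarith

lemma const_of_hasDerivAt_zero {F : ℝ → ℝ} {a b : ℝ}
    (h : ∀ x ∈ Ioo a b, HasDerivAt F 0 x) {x y : ℝ}
    (hx : x ∈ Ioo a b) (hy : y ∈ Ioo a b) : F x = F y := by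
  refine (convex_Ioo a b).is_const_of_fderivWithin_eq_zero
    (fun z hz => ((h z hz).differentiableAt).differentiableWithinAt) (fun z hz => ?_) hx hy
  rw [fderivWithin_of_isOpen isOpen_Ioo hz, (h z hz).hasFDerivAt.fderiv]
  ext
  simp

lemma tendsto_log_one_sub_div :
    Tendsto (fun z : ℝ => Real.log (1 - z) / z) (𝓝[>] 0) (𝓝 (-1)) := by
  have hD : HasDerivAt (fun z : ℝ => Real.log (1 - z)) (-1) 0 := by
    have h1 : HasDerivAt (fun z : ℝ => 1 - z) (-1) 0 := by
      simpa using (hasDerivAt_id (0:ℝ)).const_sub 1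
    have := (Real.hasDerivAt_log (by norm_num : (1:ℝ) - 0 ≠ 0)).comp 0 h1
    exact this.congr_deriv (by norm_num)
  have := hasDerivAt_iff_tendsto_slope.1 hD
  have h2 : Tendsto (slope (fun z : ℝ => Real.log (1 - z)) 0) (𝓝[>] 0) (𝓝 (-1)) :=
    this.mono_left (nhdsWithin_mono 0 (fun t ht => ne_of_gt ht))
  refine h2.congr fun z => ?_
  simp [slope_def_field, div_eq_mul_inv, mul_comm]

lemma tendsto_log_mul_self : Tendsto (fun z : ℝ => Real.log z * z) (𝓝[>] 0) (𝓝 0) := by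
  simpa using tendsto_log_mul_rpow_nhdsGT_zero (one_pos)

lemma tendsto_Li_comp {k : ℕ} (hk : 2 ≤ k) {f : ℝ → ℝ} {c : ℝ} (hc : c ∈ Icc (-1:ℝ) 1)
    (hf : Tendsto f (𝓝[>] (0:ℝ)) (𝓝 c))
    (hmem : ∀ᶠ z in 𝓝[>] (0:ℝ), f z ∈ Icc (-1:ℝ) 1) :
    Tendsto (fun z => Li k (f z)) (𝓝[>] (0:ℝ)) (𝓝 (Li k c)) :=
  ((continuousOn_Li hk c hc).tendsto).comp
    (tendsto_nhdsWithin_of_tendsto_nhds_of_eventually_within f hf hmem)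

lemma eventually_Ioo : ∀ᶠ z in 𝓝[>] (0:ℝ), z ∈ Ioo (0:ℝ) (1/2) :=
  Ioo_mem_nhdsGT_of_mem (by norm_num : (0:ℝ) ∈ Ico (0:ℝ) (1/2))

lemma tendsto_log_mul_log_one_sub :
    Tendsto (fun z : ℝ => Real.log z * Real.log (1 - z)) (𝓝[>] 0) (𝓝 0) := by
  have h := tendsto_log_mul_self.mul tendsto_log_one_sub_div
  rw [show (0:ℝ) * -1 = 0 by ring] at h
  refine h.congr' ?_
  filter_upwards [self_mem_nhdsWithin] with z hz
  have hz' : z ≠ 0 := ne_of_gt hz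
  field_simp

lemma tendsto_log_mul_sq_log_one_sub :
    Tendsto (fun z : ℝ => Real.log z * (Real.log (1 - z)) ^ 2) (𝓝[>] 0) (𝓝 0) := by
  have hz0 : Tendsto (fun z : ℝ => z) (𝓝[>] (0:ℝ)) (𝓝 0) :=
    tendsto_id.mono_right nhdsWithin_le_nhds
  have h := (tendsto_log_mul_self.mul hz0).mul
    (tendsto_log_one_sub_div.mul tendsto_log_one_sub_div)
  rw [show (0:ℝ) * 0 * (-1 * -1) = 0 by ring] at h
  refine h.congr' ?_
  filter_upwards [self_mem_nhdsWithin] with z hz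
  have hz' : z ≠ 0 := ne_of_gt hz
  field_simp

lemma euler_reflection {x : ℝ} (h0 : 0 < x) (h1 : x < 1) :
    Li 2 x + Li 2 (1 - x) = zeta 2 - Real.log x * Real.log (1 - x) := by
  set G : ℝ → ℝ := fun z => Li 2 z + Li 2 (1 - z) + Real.log z * Real.log (1 - z) with hGdef
  suffices hG : G x = zeta 2 by
    rw [hGdef] at hG; simp only [] at hG; linarith
  have hder : ∀ y ∈ Ioo (0:ℝ) 1, HasDerivAt G 0 y := by
    intro y hy
    obtain ⟨hy0, hy1⟩ := hy
    have hy1' : (0:ℝ) < 1 - y := by linarith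
    have hay : |y| < 1 := by rw [abs_of_pos hy0]; exact hy1
    have hay' : |1 - y| < 1 := by rw [abs_of_pos hy1']; linarith
    have d1 : HasDerivAt (Li 2) (Li 1 y / y) y := hasDerivAt_Li 1 hay hy0.ne'
    have dlin : HasDerivAt (fun z : ℝ => 1 - z) (-1) y := by
      simpa using (hasDerivAt_id y).const_sub 1
    have d2 : HasDerivAt (fun z => Li 2 (1 - z)) (Li 1 (1 - y) / (1 - y) * (-1)) y :=
      (hasDerivAt_Li 1 hay' hy1'.ne').comp y dlin
    have d3 : HasDerivAt Real.log y⁻¹ y := Real.hasDerivAt_log hy0.ne'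
    have d4 : HasDerivAt (fun z : ℝ => Real.log (1 - z)) ((1 - y)⁻¹ * (-1)) y :=
      (Real.hasDerivAt_log hy1'.ne').comp y dlin
    have := (d1.add d2).add (d3.mul d4)
    refine this.congr_deriv ?_
    rw [Li_one_eq hay, Li_one_eq hay', show (1:ℝ) - (1 - y) = y by ring]
    field_simp
    ring
  have hconst : ∀ y ∈ Ioo (0:ℝ) 1, G y = G x := fun y hy =>
    const_of_hasDerivAt_zero hder hy ⟨h0, h1⟩
  have hLi0 : Tendsto (fun z : ℝ => Li 2 z) (𝓝[>] (0:ℝ)) (𝓝 0) := by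
    have := tendsto_Li_comp (le_refl 2) (f := fun z => z) (c := 0) (by norm_num)
      (tendsto_id.mono_right nhdsWithin_le_nhds)
      (by filter_upwards [eventually_Ioo] with z hz
          exact ⟨by linarith [hz.1], by linarith [hz.2]⟩)
    simpa [Li_zero] using this
  have hLi1 : Tendsto (fun z : ℝ => Li 2 (1 - z)) (𝓝[>] (0:ℝ)) (𝓝 (zeta 2)) := by
    have := tendsto_Li_comp (le_refl 2) (f := fun z => 1 - z) (c := 1) (by norm_num)
      (by
        have : Tendsto (fun z : ℝ => 1 - z) (𝓝 (0:ℝ)) (𝓝 1) := by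
          have h := ((continuous_const (y := (1:ℝ))).sub continuous_id).tendsto (0:ℝ)
          convert h using 2
          all_goals simp
        exact this.mono_left nhdsWithin_le_nhds)
      (by filter_upwards [eventually_Ioo] with z hz
          exact ⟨by linarith [hz.2], by linarith [hz.1]⟩)
    simpa [Li_one] using this
  have hlim : Tendsto G (𝓝[>] (0:ℝ)) (𝓝 (zeta 2)) := by
    have := (hLi0.add hLi1).add tendsto_log_mul_log_one_sub
    simpa using this
  have hlim2 : Tendsto G (𝓝[>] (0:ℝ)) (𝓝 (G x)) := by
    refine Tendsto.congr' ?_ tendsto_const_nhds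
    filter_upwards [Ioo_mem_nhdsGT_of_mem (by norm_num : (0:ℝ) ∈ Ico (0:ℝ) 1)] with y hy
    exact (hconst y hy).symm
  exact tendsto_nhds_unique hlim2 hlim

lemma frac_mem {z : ℝ} (h0 : 0 < z) (h1 : z < 1/2) : z / (z - 1) ∈ Icc (-1:ℝ) 1 := by
  have hz1 : z - 1 < 0 := by linarith
  have hneg : z / (z - 1) < 0 := div_neg_of_pos_of_neg h0 hz1
  constructor
  · have h2 : z / (z - 1) + 1 = (2 * z - 1) / (z - 1) := by
      rw [eq_div_iff hz1.ne, add_mul, div_mul_cancel₀ _ hz1.ne]; ring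
    have h3 : (0:ℝ) < (2 * z - 1) / (z - 1) := div_pos_of_neg_of_neg (by linarith) hz1
    linarith
  · linarith

lemma frac_abs_lt {z : ℝ} (h0 : 0 < z) (h1 : z < 1/2) : |z / (z - 1)| < 1 := by
  have hz1 : z - 1 < 0 := by linarith
  rw [abs_div, abs_of_pos h0, abs_of_neg hz1, div_lt_one (by linarith)]
  linarith

lemma tendsto_frac : Tendsto (fun z : ℝ => z / (z - 1)) (𝓝[>] (0:ℝ)) (𝓝 0) := by
  have hc : ContinuousAt (fun z : ℝ => z / (z - 1)) 0 :=
    continuousAt_id.div (continuousAt_id.sub continuousAt_const) (by norm_num)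
  have h := hc.tendsto.mono_left (nhdsWithin_le_nhds (s := Set.Ioi (0:ℝ)))
  simpa using h

lemma hasDerivAt_frac {y : ℝ} (hne : y - 1 ≠ 0) :
    HasDerivAt (fun z : ℝ => z / (z - 1)) ((1 * (y - 1) - y * 1) / (y - 1) ^ 2) y :=
  (hasDerivAt_id y).div ((hasDerivAt_id y).sub_const 1) hne

lemma one_sub_frac {y : ℝ} (hne : y - 1 ≠ 0) : (1:ℝ) - y / (y - 1) = (1 - y)⁻¹ := by
  have h1 : (1:ℝ) - y ≠ 0 := by intro h; apply hne; linarith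
  field_simp
  ring

lemma Li_one_frac {y : ℝ} (h0 : 0 < y) (h1 : y < 1/2) :
    Li 1 (y / (y - 1)) = Real.log (1 - y) := by
  rw [Li_one_eq (frac_abs_lt h0 h1), one_sub_frac (by intro h; apply absurd h; intro h'; linarith),
    Real.log_inv]
  ring

lemma landen_li2 {x : ℝ} (h0 : 0 < x) (h1 : x < 1/2) :
    Li 2 (x / (x - 1)) = -Li 2 x - (1/2) * (Real.log (1 - x)) ^ 2 := by
  set B : ℝ → ℝ := fun z => Li 2 (z / (z - 1)) + Li 2 z + (1/2) * (Real.log (1 - z)) ^ 2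
    with hBdef
  suffices hB : B x = 0 by
    rw [hBdef] at hB; simp only [] at hB; linarith
  have hder : ∀ y ∈ Ioo (0:ℝ) (1/2), HasDerivAt B 0 y := by
    intro y hy
    obtain ⟨hy0, hy1⟩ := hy
    have hy1' : (0:ℝ) < 1 - y := by linarith
    have hne : y - 1 ≠ 0 := by intro h; linarith
    have hay : |y| < 1 := by rw [abs_of_pos hy0]; linarith
    have hw : |y / (y - 1)| < 1 := frac_abs_lt hy0 hy1
    have hwne : y / (y - 1) ≠ 0 := div_ne_zero hy0.ne' hne
    have d1 : HasDerivAt (fun z => Li 2 (z / (z - 1)))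
        (Li 1 (y / (y - 1)) / (y / (y - 1)) * ((1 * (y - 1) - y * 1) / (y - 1) ^ 2)) y :=
      by have := (hasDerivAt_Li 1 hw hwne).comp y (hasDerivAt_frac hne); exact this
    have d2 : HasDerivAt (Li 2) (Li 1 y / y) y := hasDerivAt_Li 1 hay hy0.ne'
    have dlin : HasDerivAt (fun z : ℝ => 1 - z) (-1) y := by
      simpa using (hasDerivAt_id y).const_sub 1
    have d4 : HasDerivAt (fun z : ℝ => Real.log (1 - z)) ((1 - y)⁻¹ * (-1)) y :=
      (Real.hasDerivAt_log hy1'.ne').comp y dlin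
    have d5 : HasDerivAt (fun z : ℝ => (1/2) * (Real.log (1 - z)) ^ 2)
        ((1/2) * ((2 : ℕ) * (Real.log (1 - y)) ^ 1 * ((1 - y)⁻¹ * (-1)))) y :=
      (d4.pow 2).const_mul (1/2)
    have := (d1.add d2).add d5
    refine this.congr_deriv ?_
    rw [Li_one_frac hy0 hy1, Li_one_eq hay]
    push_cast
    field_simp
    ring
  have hconst : ∀ y ∈ Ioo (0:ℝ) (1/2), B y = B x := fun y hy =>
    const_of_hasDerivAt_zero hder hy ⟨h0, h1⟩
  have hLi0 : Tendsto (fun z : ℝ => Li 2 z) (𝓝[>] (0:ℝ)) (𝓝 0) := by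
    have := tendsto_Li_comp (le_refl 2) (f := fun z => z) (c := 0) (by norm_num)
      (tendsto_id.mono_right nhdsWithin_le_nhds)
      (by filter_upwards [eventually_Ioo] with z hz
          exact ⟨by linarith [hz.1], by linarith [hz.2]⟩)
    simpa [Li_zero] using this
  have hLiw : Tendsto (fun z : ℝ => Li 2 (z / (z - 1))) (𝓝[>] (0:ℝ)) (𝓝 0) := by
    have := tendsto_Li_comp (le_refl 2) (f := fun z => z / (z - 1)) (c := 0) (by norm_num)
      tendsto_frac
      (by filter_upwards [eventually_Ioo] with z hz using frac_mem hz.1 hz.2)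
    simpa [Li_zero] using this
  have hlog : Tendsto (fun z : ℝ => (1/2) * (Real.log (1 - z)) ^ 2) (𝓝[>] (0:ℝ)) (𝓝 0) := by
    have hc : ContinuousAt (fun z : ℝ => (1/2) * (Real.log (1 - z)) ^ 2) 0 := by
      have : ContinuousAt (fun z : ℝ => Real.log (1 - z)) 0 :=
        (Real.continuousAt_log (by norm_num)).comp (continuousAt_const.sub continuousAt_id)
      exact (this.pow 2).const_mul _
    have h := hc.tendsto.mono_left (nhdsWithin_le_nhds (s := Set.Ioi (0:ℝ)))
    simpa using h
  have hlim : Tendsto B (𝓝[>] (0:ℝ)) (𝓝 0) := by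
    have h := (hLiw.add hLi0).add hlog
    rw [show (0:ℝ) + 0 + 0 = 0 from by norm_num] at h
    exact h
  have hlim2 : Tendsto B (𝓝[>] (0:ℝ)) (𝓝 (B x)) := by
    refine Tendsto.congr' ?_ tendsto_const_nhds
    filter_upwards [eventually_Ioo] with y hy
    exact (hconst y hy).symm
  exact tendsto_nhds_unique hlim2 hlim

/-- Landen's trilogarithm functional equation. -/
theorem landen_trilog (z : ℝ) (h0 : 0 < z) (h1 : z < 1 / 2) :
    Li 3 z + Li 3 (1 - z) + Li 3 (z / (z - 1)) =
      zeta 3 + zeta 2 * Real.log (1 - z)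
        - (1 / 2) * Real.log z * (Real.log (1 - z)) ^ 2
        + (1 / 6) * (Real.log (1 - z)) ^ 3 := by
  set F : ℝ → ℝ := fun t => (Li 3 t + Li 3 (1 - t) + Li 3 (t / (t - 1))) -
      (zeta 3 + zeta 2 * Real.log (1 - t)
        - (1 / 2) * Real.log t * (Real.log (1 - t)) ^ 2
        + (1 / 6) * (Real.log (1 - t)) ^ 3) with hFdef
  suffices hF : F z = 0 by
    rw [hFdef] at hF; simp only [] at hF; linarith
  have hder : ∀ y ∈ Ioo (0:ℝ) (1/2), HasDerivAt F 0 y := by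
    intro y hy
    obtain ⟨hy0, hy1⟩ := hy
    have hy1' : (0:ℝ) < 1 - y := by linarith
    have hne : y - 1 ≠ 0 := by intro h; linarith
    have hay : |y| < 1 := by rw [abs_of_pos hy0]; linarith
    have hay' : |1 - y| < 1 := by rw [abs_of_pos hy1']; linarith
    have hw : |y / (y - 1)| < 1 := frac_abs_lt hy0 hy1
    have hwne : y / (y - 1) ≠ 0 := div_ne_zero hy0.ne' hne
    have d1 : HasDerivAt (Li 3) (Li 2 y / y) y := hasDerivAt_Li 2 hay hy0.ne'
    have dlin : HasDerivAt (fun t : ℝ => 1 - t) (-1) y := by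
      simpa using (hasDerivAt_id y).const_sub 1
    have d2 : HasDerivAt (fun t => Li 3 (1 - t)) (Li 2 (1 - y) / (1 - y) * (-1)) y :=
      (hasDerivAt_Li 2 hay' hy1'.ne').comp y dlin
    have d3 : HasDerivAt (fun t => Li 3 (t / (t - 1)))
        (Li 2 (y / (y - 1)) / (y / (y - 1)) * ((1 * (y - 1) - y * 1) / (y - 1) ^ 2)) y :=
      by have := (hasDerivAt_Li 2 hw hwne).comp y (hasDerivAt_frac hne); exact this
    have d4 : HasDerivAt (fun t : ℝ => Real.log (1 - t)) ((1 - y)⁻¹ * (-1)) y :=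
      (Real.hasDerivAt_log hy1'.ne').comp y dlin
    have d5 : HasDerivAt (fun t : ℝ => zeta 2 * Real.log (1 - t))
        (zeta 2 * ((1 - y)⁻¹ * (-1))) y := d4.const_mul (zeta 2)
    have d6 : HasDerivAt (fun t : ℝ => (1/2) * Real.log t) ((1/2) * y⁻¹) y :=
      (Real.hasDerivAt_log hy0.ne').const_mul (1/2)
    have d7 : HasDerivAt (fun t : ℝ => (Real.log (1 - t)) ^ 2)
        ((2 : ℕ) * (Real.log (1 - y)) ^ 1 * ((1 - y)⁻¹ * (-1))) y := d4.pow 2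
    have d8 : HasDerivAt (fun t : ℝ => (1/2) * Real.log t * (Real.log (1 - t)) ^ 2)
        ((1/2) * y⁻¹ * (Real.log (1 - y)) ^ 2 +
          (1/2) * Real.log y * ((2 : ℕ) * (Real.log (1 - y)) ^ 1 * ((1 - y)⁻¹ * (-1)))) y :=
      d6.mul d7
    have d9 : HasDerivAt (fun t : ℝ => (1/6) * (Real.log (1 - t)) ^ 3)
        ((1/6) * ((3 : ℕ) * (Real.log (1 - y)) ^ 2 * ((1 - y)⁻¹ * (-1)))) y :=
      (d4.pow 3).const_mul (1/6)
    have dtot := ((d1.add d2).add d3).sub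
      (((hasDerivAt_const y (zeta 3)).add d5).sub d8 |>.add d9)
    refine dtot.congr_deriv ?_
    have he : Li 2 (1 - y) = zeta 2 - Real.log y * Real.log (1 - y) - Li 2 y := by
      have := euler_reflection hy0 (by linarith : y < 1)
      linarith
    rw [he, landen_li2 hy0 hy1]
    push_cast
    field_simp
    ring
  have hconst : ∀ y ∈ Ioo (0:ℝ) (1/2), F y = F z := fun y hy =>
    const_of_hasDerivAt_zero hder hy ⟨h0, h1⟩
  have hLi0 : Tendsto (fun t : ℝ => Li 3 t) (𝓝[>] (0:ℝ)) (𝓝 0) := by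
    have := tendsto_Li_comp (by norm_num : 2 ≤ 3) (f := fun t => t) (c := 0) (by norm_num)
      (tendsto_id.mono_right nhdsWithin_le_nhds)
      (by filter_upwards [eventually_Ioo] with t ht
          exact ⟨by linarith [ht.1], by linarith [ht.2]⟩)
    simpa [Li_zero] using this
  have hLi1 : Tendsto (fun t : ℝ => Li 3 (1 - t)) (𝓝[>] (0:ℝ)) (𝓝 (zeta 3)) := by
    have := tendsto_Li_comp (by norm_num : 2 ≤ 3) (f := fun t => 1 - t) (c := 1) (by norm_num)
      (by
        have h : Tendsto (fun t : ℝ => 1 - t) (𝓝 (0:ℝ)) (𝓝 1) := by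
          have h2 := ((continuous_const (y := (1:ℝ))).sub continuous_id).tendsto (0:ℝ)
          convert h2 using 2
          all_goals simp
        exact h.mono_left nhdsWithin_le_nhds)
      (by filter_upwards [eventually_Ioo] with t ht
          exact ⟨by linarith [ht.2], by linarith [ht.1]⟩)
    simpa [Li_one] using this
  have hLiw : Tendsto (fun t : ℝ => Li 3 (t / (t - 1))) (𝓝[>] (0:ℝ)) (𝓝 0) := by
    have := tendsto_Li_comp (by norm_num : 2 ≤ 3) (f := fun t => t / (t - 1)) (c := 0)
      (by norm_num) tendsto_frac
      (by filter_upwards [eventually_Ioo] with t ht using frac_mem ht.1 ht.2)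
    simpa [Li_zero] using this
  have hlog1 : Tendsto (fun t : ℝ => zeta 2 * Real.log (1 - t)) (𝓝[>] (0:ℝ)) (𝓝 0) := by
    have hc : ContinuousAt (fun t : ℝ => zeta 2 * Real.log (1 - t)) 0 :=
      (((Real.continuousAt_log (by norm_num)).comp
        (continuousAt_const.sub continuousAt_id))).const_mul _
    have h := hc.tendsto.mono_left (nhdsWithin_le_nhds (s := Set.Ioi (0:ℝ)))
    simpa using h
  have hlog2 : Tendsto (fun t : ℝ => (1/2) * Real.log t * (Real.log (1 - t)) ^ 2)
      (𝓝[>] (0:ℝ)) (𝓝 0) := by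
    have h := tendsto_log_mul_sq_log_one_sub.const_mul (1/2 : ℝ)
    rw [show (1/2 : ℝ) * 0 = 0 from by norm_num] at h
    refine h.congr fun t => by ring
  have hlog3 : Tendsto (fun t : ℝ => (1/6) * (Real.log (1 - t)) ^ 3) (𝓝[>] (0:ℝ)) (𝓝 0) := by
    have hc : ContinuousAt (fun t : ℝ => (1/6) * (Real.log (1 - t)) ^ 3) 0 := by
      have h2 : ContinuousAt (fun t : ℝ => Real.log (1 - t)) 0 :=
        (Real.continuousAt_log (by norm_num)).comp (continuousAt_const.sub continuousAt_id)
      exact (h2.pow 3).const_mul _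
    have h := hc.tendsto.mono_left (nhdsWithin_le_nhds (s := Set.Ioi (0:ℝ)))
    simpa using h
  have hlim : Tendsto F (𝓝[>] (0:ℝ)) (𝓝 0) := by
    have h := ((hLi0.add hLi1).add hLiw).sub
      ((((tendsto_const_nhds (x := zeta 3)).add hlog1).sub hlog2).add hlog3)
    rw [show (0:ℝ) + zeta 3 + 0 - (zeta 3 + 0 - 0 + 0) = 0 from by ring] at h
    exact h
  have hlim2 : Tendsto F (𝓝[>] (0:ℝ)) (𝓝 (F z)) := by
    refine Tendsto.congr' ?_ tendsto_const_nhds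
    filter_upwards [eventually_Ioo] with y hy
    exact (hconst y hy).symm
  exact tendsto_nhds_unique hlim2 hlim
end

section
/- For every real number z with 0 < z < 1/2, one has −Li₃(z/(z−1)) = Li₃(z) + Li_{(1,1,1)}(z) + Li_{(1,2)}(z) + Li_{(2,1)}(z), where Li_{(1,1,1)}(z) = ∑_{0<n₁<n₂<n₃} z^{n₃}/(n₁n₂n₃), Li_{(1,2)}(z) = ∑_{0<m<n} zⁿ/(m·n²) and Li_{(2,1)}(z) = ∑_{0<m<n} zⁿ/(m²·n). (Note that for 0 < z < 1/2 the argument z/(z−1) lies in (−1,0), so the trilogarithm series converges absolutely there.) -/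
/-- The double polylogarithm `Li_{(1,2)}(z) = ∑_{0<m<n} zⁿ/(m·n²)`. -/
noncomputable def Li12 (z : ℝ) : ℝ :=
  ∑' p : {q : ℕ+ × ℕ+ // q.1 < q.2},
    z ^ ((p.1.2 : ℕ)) / (((p.1.1 : ℕ) : ℝ) * ((p.1.2 : ℕ) : ℝ) ^ 2)

/-- The double polylogarithm `Li_{(2,1)}(z) = ∑_{0<m<n} zⁿ/(m²·n)`. -/
noncomputable def Li21 (z : ℝ) : ℝ :=
  ∑' p : {q : ℕ+ × ℕ+ // q.1 < q.2},
    z ^ ((p.1.2 : ℕ)) / (((p.1.1 : ℕ) : ℝ) ^ 2 * ((p.1.2 : ℕ) : ℝ))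

/-- The triple polylogarithm `Li_{(1,1,1)}(z) = ∑_{0<n₁<n₂<n₃} z^{n₃}/(n₁n₂n₃)`. -/
noncomputable def Li111 (z : ℝ) : ℝ :=
  ∑' t : {s : ℕ+ × ℕ+ × ℕ+ // s.1 < s.2.1 ∧ s.2.1 < s.2.2},
    z ^ ((t.1.2.2 : ℕ)) /
      (((t.1.1 : ℕ) : ℝ) * ((t.1.2.1 : ℕ) : ℝ) * ((t.1.2.2 : ℕ) : ℝ))

set_option maxHeartbeats 2000000

open Finset

/-- Harmonic number `H N = ∑_{i=1}^N 1/i`. -/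
noncomputable def Hh (N : ℕ) : ℝ := ∑ i ∈ Finset.range N, 1 / ((i : ℝ) + 1)

noncomputable def Hh2 (N : ℕ) : ℝ := ∑ i ∈ Finset.range N, 1 / ((i : ℝ) + 1) ^ 2

noncomputable def ee (N : ℕ) : ℝ := ∑ j ∈ Finset.range N, Hh j / ((j : ℝ) + 1)

lemma alt_choose_sum (M : ℕ) :
    ∑ n ∈ range (M + 1), ((-1 : ℝ) ^ n * ((M + 1).choose (n + 1))) = 1 := by
  have h : (∑ m ∈ range (M + 2), ((-1) ^ m * (M + 1).choose m : ℤ)) = 0 :=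
    Int.alternating_sum_range_choose_of_ne (Nat.succ_ne_zero M)
  rw [Finset.sum_range_succ'] at h
  have h2 : (∑ i ∈ range (M + 1), ((-1) ^ (i + 1) * (M + 1).choose (i + 1) : ℤ)) + 1 = 0 := by
    simpa using h
  have h3 : (∑ i ∈ range (M + 1), ((-1) ^ i * (M + 1).choose (i + 1) : ℤ)) = 1 := by
    have : (∑ i ∈ range (M + 1), ((-1) ^ i * (M + 1).choose (i + 1) : ℤ))
        = -∑ i ∈ range (M + 1), ((-1) ^ (i + 1) * (M + 1).choose (i + 1) : ℤ) := by
      rw [← Finset.sum_neg_distrib]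
      exact Finset.sum_congr rfl fun i _ => by ring
    rw [this]; omega
  exact_mod_cast h3

/-- key cast identity `C(M,n)/(n+1) = C(M+1,n+1)/(M+1)` in ℝ. -/
lemma choose_div_succ (M n : ℕ) :
    ((M.choose n : ℝ)) / ((n : ℝ) + 1) = ((M + 1).choose (n + 1) : ℝ) / ((M : ℝ) + 1) := by
  have h := Nat.add_one_mul_choose_eq M n
  have h' : ((M : ℝ) + 1) * (M.choose n : ℝ) = ((M + 1).choose (n + 1) : ℝ) * ((n : ℝ) + 1) := by
    exact_mod_cast congrArg (Nat.cast : ℕ → ℝ) h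
  have hn : ((n : ℝ) + 1) ≠ 0 := by positivity
  have hM : ((M : ℝ) + 1) ≠ 0 := by positivity
  field_simp
  linarith [h']

lemma sumB (M : ℕ) :
    ∑ n ∈ range M, ((-1 : ℝ) ^ n * (M.choose (n + 1)) / ((n : ℝ) + 1)) = Hh M := by
  induction M with
  | zero => simp [Hh]
  | succ M ih =>
    have pascal : ∀ n : ℕ, (((M + 1).choose (n + 1) : ℝ)) = M.choose (n + 1) + M.choose n := by
      intro n; rw [Nat.choose_succ_succ]; push_cast; ring
    have split : ∑ n ∈ range (M + 1), ((-1 : ℝ) ^ n * ((M + 1).choose (n + 1)) / ((n : ℝ) + 1))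
        = (∑ n ∈ range (M + 1), ((-1 : ℝ) ^ n * (M.choose (n + 1)) / ((n : ℝ) + 1)))
          + ∑ n ∈ range (M + 1), ((-1 : ℝ) ^ n * (M.choose n) / ((n : ℝ) + 1)) := by
      rw [← Finset.sum_add_distrib]
      exact Finset.sum_congr rfl fun n _ => by rw [pascal n]; ring
    have first : ∑ n ∈ range (M + 1), ((-1 : ℝ) ^ n * (M.choose (n + 1)) / ((n : ℝ) + 1))
        = Hh M := by
      rw [Finset.sum_range_succ, Nat.choose_succ_self, ih]; simp
    have second : ∑ n ∈ range (M + 1), ((-1 : ℝ) ^ n * (M.choose n) / ((n : ℝ) + 1))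
        = 1 / ((M : ℝ) + 1) := by
      have : ∀ n ∈ range (M + 1), ((-1 : ℝ) ^ n * (M.choose n) / ((n : ℝ) + 1))
          = ((-1 : ℝ) ^ n * ((M + 1).choose (n + 1))) * (1 / ((M : ℝ) + 1)) := by
        intro n _
        have := choose_div_succ M n
        calc ((-1 : ℝ) ^ n * (M.choose n) / ((n : ℝ) + 1))
            = (-1 : ℝ) ^ n * ((M.choose n : ℝ) / ((n : ℝ) + 1)) := by ring
          _ = (-1 : ℝ) ^ n * (((M + 1).choose (n + 1) : ℝ) / ((M : ℝ) + 1)) := by rw [this]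
          _ = ((-1 : ℝ) ^ n * ((M + 1).choose (n + 1))) * (1 / ((M : ℝ) + 1)) := by ring
      rw [Finset.sum_congr rfl this, ← Finset.sum_mul, alt_choose_sum, one_mul]
    have hstep : Hh (M + 1) = Hh M + 1 / ((M : ℝ) + 1) := by
      rw [Hh, Hh, Finset.sum_range_succ]
    rw [split, first, second, hstep]

lemma Hh_succ (M : ℕ) : Hh (M + 1) = Hh M + 1 / ((M : ℝ) + 1) := by
  rw [Hh, Hh, Finset.sum_range_succ]

lemma Hh2_succ (M : ℕ) : Hh2 (M + 1) = Hh2 M + 1 / ((M : ℝ) + 1) ^ 2 := by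
  rw [Hh2, Hh2, Finset.sum_range_succ]

lemma ee_succ (M : ℕ) : ee (M + 1) = ee M + Hh M / ((M : ℝ) + 1) := by
  rw [ee, ee, Finset.sum_range_succ]

lemma sumA (M : ℕ) :
    ∑ n ∈ range M, ((-1 : ℝ) ^ n * (M.choose (n + 1)) / ((n : ℝ) + 1) ^ 2)
      = (Hh M ^ 2 + Hh2 M) / 2 := by
  induction M with
  | zero => simp [Hh, Hh2]
  | succ M ih =>
    have pascal : ∀ n : ℕ, (((M + 1).choose (n + 1) : ℝ)) = M.choose (n + 1) + M.choose n := by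
      intro n; rw [Nat.choose_succ_succ]; push_cast; ring
    have split : ∑ n ∈ range (M + 1), ((-1 : ℝ) ^ n * ((M + 1).choose (n + 1)) / ((n : ℝ) + 1) ^ 2)
        = (∑ n ∈ range (M + 1), ((-1 : ℝ) ^ n * (M.choose (n + 1)) / ((n : ℝ) + 1) ^ 2))
          + ∑ n ∈ range (M + 1), ((-1 : ℝ) ^ n * (M.choose n) / ((n : ℝ) + 1) ^ 2) := by
      rw [← Finset.sum_add_distrib]
      exact Finset.sum_congr rfl fun n _ => by rw [pascal n]; ring
    have first : ∑ n ∈ range (M + 1), ((-1 : ℝ) ^ n * (M.choose (n + 1)) / ((n : ℝ) + 1) ^ 2)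
        = (Hh M ^ 2 + Hh2 M) / 2 := by
      rw [Finset.sum_range_succ, Nat.choose_succ_self, ih]; simp
    have second : ∑ n ∈ range (M + 1), ((-1 : ℝ) ^ n * (M.choose n) / ((n : ℝ) + 1) ^ 2)
        = Hh (M + 1) / ((M : ℝ) + 1) := by
      have key : ∀ n ∈ range (M + 1), ((-1 : ℝ) ^ n * (M.choose n) / ((n : ℝ) + 1) ^ 2)
          = ((-1 : ℝ) ^ n * ((M + 1).choose (n + 1)) / ((n : ℝ) + 1)) * (1 / ((M : ℝ) + 1)) := by
        intro n _
        have h' : ((M : ℝ) + 1) * (M.choose n : ℝ)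
            = ((M + 1).choose (n + 1) : ℝ) * ((n : ℝ) + 1) := by
          exact_mod_cast congrArg (Nat.cast : ℕ → ℝ) (Nat.add_one_mul_choose_eq M n)
        have hn : ((n : ℝ) + 1) ≠ 0 := by positivity
        have hM : ((M : ℝ) + 1) ≠ 0 := by positivity
        rw [show ((-1 : ℝ) ^ n * (M.choose n) / ((n : ℝ) + 1) ^ 2) = (-1 : ℝ) ^ n * ((M.choose n : ℝ) / ((n : ℝ) + 1)) / ((n : ℝ) + 1) by field_simp, choose_div_succ M n]
        ring
      rw [Finset.sum_congr rfl key, ← Finset.sum_mul, sumB (M + 1)]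
      ring
    rw [split, first, second, Hh_succ, Hh2_succ]
    have hM : ((M : ℝ) + 1) ≠ 0 := by positivity
    field_simp
    ring

lemma sumE (N : ℕ) : ee N = (Hh N ^ 2 - Hh2 N) / 2 := by
  induction N with
  | zero => simp [ee, Hh, Hh2]
  | succ N ih =>
    rw [ee_succ, ih, Hh_succ, Hh2_succ]
    have hN : ((N : ℝ) + 1) ≠ 0 := by positivity
    field_simp
    ring

/-- Per-coefficient identity. -/
lemma coeff_id (N : ℕ) :
    ∑ n ∈ range (N + 1), ((-1 : ℝ) ^ n * (N.choose n) / ((n : ℝ) + 1) ^ 3)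
      = 1 / ((N : ℝ) + 1) ^ 3 + Hh N / ((N : ℝ) + 1) ^ 2 + Hh2 N / ((N : ℝ) + 1)
        + ee N / ((N : ℝ) + 1) := by
  have key : ∀ n ∈ range (N + 1), ((-1 : ℝ) ^ n * (N.choose n) / ((n : ℝ) + 1) ^ 3)
      = ((-1 : ℝ) ^ n * ((N + 1).choose (n + 1)) / ((n : ℝ) + 1) ^ 2) * (1 / ((N : ℝ) + 1)) := by
    intro n _
    have h' : ((N : ℝ) + 1) * (N.choose n : ℝ)
        = ((N + 1).choose (n + 1) : ℝ) * ((n : ℝ) + 1) := by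
      exact_mod_cast congrArg (Nat.cast : ℕ → ℝ) (Nat.add_one_mul_choose_eq N n)
    have hn : ((n : ℝ) + 1) ≠ 0 := by positivity
    have hN : ((N : ℝ) + 1) ≠ 0 := by positivity
    rw [show ((-1 : ℝ) ^ n * (N.choose n) / ((n : ℝ) + 1) ^ 3) = (-1 : ℝ) ^ n * ((N.choose n : ℝ) / ((n : ℝ) + 1)) / ((n : ℝ) + 1) ^ 2 by field_simp, choose_div_succ N n]
    ring
  rw [Finset.sum_congr rfl key, ← Finset.sum_mul, sumA (N + 1), sumE, Hh_succ, Hh2_succ]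
  have hN : ((N : ℝ) + 1) ≠ 0 := by positivity
  field_simp
  ring

/-- Reindexing pairs `0 < m < n` by `(n-2, m-1)`. -/
def pairEquiv : (Σ n : ℕ, Fin (n + 1)) ≃ {q : ℕ+ × ℕ+ // q.1 < q.2} where
  toFun x := ⟨(⟨(x.2 : ℕ) + 1, Nat.succ_pos _⟩, ⟨x.1 + 2, Nat.succ_pos _⟩),
    (PNat.mk_lt_mk _ _ _ _).mpr (by have := x.2.isLt; omega)⟩
  invFun q := ⟨(q.1.2 : ℕ) - 2, ⟨(q.1.1 : ℕ) - 1, by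
    have h : (q.1.1 : ℕ) < (q.1.2 : ℕ) := (PNat.coe_lt_coe _ _).mpr q.2
    have h1 := q.1.1.2
    omega⟩⟩
  left_inv x := rfl
  right_inv := fun ⟨⟨⟨a, ha⟩, ⟨b, hb⟩⟩, hq⟩ => by
    have h : a < b := (PNat.coe_lt_coe _ _).mpr hq
    apply Subtype.ext
    apply Prod.ext <;> (apply PNat.coe_injective; simp; omega)

/-- Reindexing triples `0 < m₁ < m₂ < m₃` by `(m₃-3, m₂-2, m₁-1)`. -/
def tripleEquiv : (Σ n : ℕ, Σ j : Fin (n + 1), Fin ((j : ℕ) + 1)) ≃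
    {s : ℕ+ × ℕ+ × ℕ+ // s.1 < s.2.1 ∧ s.2.1 < s.2.2} where
  toFun x := ⟨(⟨(x.2.2 : ℕ) + 1, Nat.succ_pos _⟩, ⟨(x.2.1 : ℕ) + 2, Nat.succ_pos _⟩,
      ⟨x.1 + 3, Nat.succ_pos _⟩),
    ⟨(PNat.mk_lt_mk _ _ _ _).mpr (by have := x.2.2.isLt; omega),
     (PNat.mk_lt_mk _ _ _ _).mpr (by have := x.2.1.isLt; omega)⟩⟩
  invFun s := ⟨(s.1.2.2 : ℕ) - 3,
    ⟨(s.1.2.1 : ℕ) - 2, by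
      have h2 : (s.1.2.1 : ℕ) < (s.1.2.2 : ℕ) := (PNat.coe_lt_coe _ _).mpr s.2.2
      have h1 : (s.1.1 : ℕ) < (s.1.2.1 : ℕ) := (PNat.coe_lt_coe _ _).mpr s.2.1
      have h0 := s.1.1.2
      omega⟩,
    ⟨(s.1.1 : ℕ) - 1, by
      have h1 : (s.1.1 : ℕ) < (s.1.2.1 : ℕ) := (PNat.coe_lt_coe _ _).mpr s.2.1
      have h0 := s.1.1.2
      have h3 := s.1.2.1.2
      simp only []
      omega⟩⟩
  left_inv x := rfl
  right_inv := fun ⟨⟨⟨a, ha⟩, ⟨b, hb⟩, ⟨c, hc⟩⟩, hab, hbc⟩ => by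
    have h1 : a < b := (PNat.coe_lt_coe _ _).mpr hab
    have h2 : b < c := (PNat.coe_lt_coe _ _).mpr hbc
    apply Subtype.ext
    apply Prod.ext
    · apply PNat.coe_injective; simp; omega
    · apply Prod.ext <;> (apply PNat.coe_injective; simp; omega)

lemma Hh_nonneg (N : ℕ) : 0 ≤ Hh N := Finset.sum_nonneg fun i _ => by positivity
lemma Hh2_nonneg (N : ℕ) : 0 ≤ Hh2 N := Finset.sum_nonneg fun i _ => by positivity
lemma ee_nonneg (N : ℕ) : 0 ≤ ee N := Finset.sum_nonneg fun i _ => by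
  have := Hh_nonneg i; positivity

lemma Hh_le (N : ℕ) : Hh N ≤ N := by
  have h : ∀ i ∈ Finset.range N, 1 / ((i : ℝ) + 1) ≤ 1 := fun i _ => by
    rw [div_le_one (by positivity)]
    have : (0:ℝ) ≤ (i : ℝ) := Nat.cast_nonneg i
    linarith
  calc Hh N ≤ ∑ _i ∈ Finset.range N, (1 : ℝ) := Finset.sum_le_sum h
    _ = N := by simp

lemma Hh2_le (N : ℕ) : Hh2 N ≤ N := by
  have h : ∀ i ∈ Finset.range N, 1 / ((i : ℝ) + 1) ^ 2 ≤ 1 := fun i _ => by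
    rw [div_le_one (by positivity)]
    have : (0:ℝ) ≤ (i : ℝ) := Nat.cast_nonneg i
    nlinarith
  calc Hh2 N ≤ ∑ _i ∈ Finset.range N, (1 : ℝ) := Finset.sum_le_sum h
    _ = N := by simp

lemma ee_le (N : ℕ) : ee N ≤ (N : ℝ) * N := by
  have h : ∀ j ∈ Finset.range N, Hh j / ((j : ℝ) + 1) ≤ N := fun j hj => by
    have hj' : (j : ℝ) ≤ N := by
      exact_mod_cast Nat.le_of_lt (Finset.mem_range.mp hj)
    calc Hh j / ((j : ℝ) + 1) ≤ Hh j := by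
          apply div_le_self (Hh_nonneg j)
          have : (0:ℝ) ≤ (j : ℝ) := Nat.cast_nonneg j
          linarith
      _ ≤ j := Hh_le j
      _ ≤ N := hj'
  calc ee N ≤ ∑ _j ∈ Finset.range N, (N : ℝ) := Finset.sum_le_sum h
    _ = (N : ℝ) * N := by simp [mul_comm]

noncomputable def F12 (z : ℝ) (x : Σ n : ℕ, Fin (n + 1)) : ℝ :=
  z ^ (x.1 + 2) / (((((x.2 : ℕ) + 1 : ℕ)) : ℝ) * (((x.1 + 2 : ℕ)) : ℝ) ^ 2)

lemma hasSum_Li12 {z : ℝ} (h0 : 0 < z) (h1 : z < 1) :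
    HasSum (fun N : ℕ => z ^ (N + 1) * (Hh N / ((N : ℝ) + 1) ^ 2)) (Li12 z) := by
  have hF : (fun p : {q : ℕ+ × ℕ+ // q.1 < q.2} =>
      z ^ ((p.1.2 : ℕ)) / (((p.1.1 : ℕ) : ℝ) * ((p.1.2 : ℕ) : ℝ) ^ 2)) ∘ pairEquiv
      = F12 z := by
    funext x
    simp only [Function.comp, pairEquiv, Equiv.coe_fn_mk, F12]
    rfl
  have hFnonneg : ∀ x, 0 ≤ F12 z x := fun x => by
    unfold F12
    apply div_nonneg (pow_nonneg h0.le _) (by positivity)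
  have fibersum : ∀ n : ℕ, (∑ k : Fin (n + 1), F12 z ⟨n, k⟩)
      = z ^ (n + 2) * (Hh (n + 1) / ((n : ℝ) + 2) ^ 2) := by
    intro n
    have step : (∑ k : Fin (n + 1), F12 z ⟨n, k⟩)
        = ∑ i ∈ Finset.range (n + 1),
            z ^ (n + 2) / ((((i + 1 : ℕ)) : ℝ) * (((n + 2 : ℕ)) : ℝ) ^ 2) :=
      Fin.sum_univ_eq_sum_range
        (fun i => z ^ (n + 2) / ((((i + 1 : ℕ)) : ℝ) * (((n + 2 : ℕ)) : ℝ) ^ 2)) (n + 1)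
    rw [step, Hh, Finset.sum_div, Finset.mul_sum]
    refine Finset.sum_congr rfl fun i _ => ?_
    push_cast
    rw [div_div, mul_one_div]
  have hsummableF : Summable (F12 z) := by
    rw [summable_sigma_of_nonneg hFnonneg]
    refine ⟨fun n => (hasSum_fintype _).summable, ?_⟩
    have heq : (fun n : ℕ => ∑' k : Fin (n + 1), F12 z ⟨n, k⟩)
        = fun n : ℕ => z ^ (n + 2) * (Hh (n + 1) / ((n : ℝ) + 2) ^ 2) := by
      funext n; rw [tsum_fintype, fibersum n]
    rw [heq]
    have hb : Summable (fun n : ℕ => (((n + 1 : ℕ)) : ℝ) ^ 1 * z ^ (n + 1)) :=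
      (summable_nat_add_iff (f := fun n : ℕ => (n : ℝ) ^ 1 * z ^ n) 1).mpr (summable_pow_mul_geometric_of_norm_lt_one 1
        (by rw [Real.norm_eq_abs, abs_of_pos h0]; exact h1))
    apply Summable.of_nonneg_of_le ?_ ?_ hb
    · intro n
      have := Hh_nonneg (n + 1)
      positivity
    · intro n
      have h2' : (1:ℝ) ≤ ((n : ℝ) + 2) ^ 2 := by nlinarith [Nat.cast_nonneg (α := ℝ) n]
      have hle1 : Hh (n + 1) / ((n : ℝ) + 2) ^ 2 ≤ (n : ℝ) + 1 := by
        calc Hh (n + 1) / ((n : ℝ) + 2) ^ 2 ≤ Hh (n + 1) :=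
              div_le_self (Hh_nonneg _) h2'
          _ ≤ ((n + 1 : ℕ) : ℝ) := Hh_le (n + 1)
          _ = (n : ℝ) + 1 := by push_cast; ring
      have hz2 : z ^ (n + 2) ≤ z ^ (n + 1) :=
        pow_le_pow_of_le_one (le_of_lt h0) (le_of_lt h1) (by omega)
      calc z ^ (n + 2) * (Hh (n + 1) / ((n : ℝ) + 2) ^ 2)
          ≤ z ^ (n + 1) * ((n : ℝ) + 1) := by
            apply mul_le_mul hz2 hle1 ?_ (by positivity)
            have := Hh_nonneg (n + 1)
            positivity
        _ = (((n + 1 : ℕ)) : ℝ) ^ 1 * z ^ (n + 1) := by push_cast; ring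
  have htsum : HasSum (F12 z) (Li12 z) := by
    have h1' : ∑' x, F12 z x = Li12 z := by
      rw [← hF]
      exact pairEquiv.tsum_eq (fun p : {q : ℕ+ × ℕ+ // q.1 < q.2} =>
        z ^ ((p.1.2 : ℕ)) / (((p.1.1 : ℕ) : ℝ) * ((p.1.2 : ℕ) : ℝ) ^ 2))
    exact h1' ▸ hsummableF.hasSum
  have hsig : HasSum (fun n : ℕ => z ^ (n + 2) * (Hh (n + 1) / ((n : ℝ) + 2) ^ 2)) (Li12 z) := by
    refine htsum.sigma fun n => ?_
    rw [← fibersum n]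
    exact hasSum_fintype _
  have hshift : (fun n : ℕ => (fun N : ℕ => z ^ (N + 1) * (Hh N / ((N : ℝ) + 1) ^ 2)) (n + 1))
      = fun n : ℕ => z ^ (n + 2) * (Hh (n + 1) / ((n : ℝ) + 2) ^ 2) := by
    funext n; push_cast; ring_nf
  have hfin := (hasSum_nat_add_iff
    (f := fun N : ℕ => z ^ (N + 1) * (Hh N / ((N : ℝ) + 1) ^ 2)) 1).mp
    (by rw [hshift]; exact hsig)
  simpa [Hh] using hfin

noncomputable def F21 (z : ℝ) (x : Σ n : ℕ, Fin (n + 1)) : ℝ :=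
  z ^ (x.1 + 2) / (((((x.2 : ℕ) + 1 : ℕ)) : ℝ) ^ 2 * (((x.1 + 2 : ℕ)) : ℝ))

lemma hasSum_Li21 {z : ℝ} (h0 : 0 < z) (h1 : z < 1) :
    HasSum (fun N : ℕ => z ^ (N + 1) * (Hh2 N / ((N : ℝ) + 1))) (Li21 z) := by
  have hF : (fun p : {q : ℕ+ × ℕ+ // q.1 < q.2} =>
      z ^ ((p.1.2 : ℕ)) / (((p.1.1 : ℕ) : ℝ) ^ 2 * ((p.1.2 : ℕ) : ℝ))) ∘ pairEquiv
      = F21 z := by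
    funext x
    simp only [Function.comp, pairEquiv, Equiv.coe_fn_mk, F21]
    rfl
  have hFnonneg : ∀ x, 0 ≤ F21 z x := fun x => by
    unfold F21
    apply div_nonneg (pow_nonneg h0.le _) (by positivity)
  have fibersum : ∀ n : ℕ, (∑ k : Fin (n + 1), F21 z ⟨n, k⟩)
      = z ^ (n + 2) * (Hh2 (n + 1) / ((n : ℝ) + 2)) := by
    intro n
    have step : (∑ k : Fin (n + 1), F21 z ⟨n, k⟩)
        = ∑ i ∈ Finset.range (n + 1),
            z ^ (n + 2) / ((((i + 1 : ℕ)) : ℝ) ^ 2 * (((n + 2 : ℕ)) : ℝ)) :=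
      Fin.sum_univ_eq_sum_range
        (fun i => z ^ (n + 2) / ((((i + 1 : ℕ)) : ℝ) ^ 2 * (((n + 2 : ℕ)) : ℝ))) (n + 1)
    rw [step, Hh2, Finset.sum_div, Finset.mul_sum]
    refine Finset.sum_congr rfl fun i _ => ?_
    push_cast
    rw [div_div, mul_one_div]
  have hsummableF : Summable (F21 z) := by
    rw [summable_sigma_of_nonneg hFnonneg]
    refine ⟨fun n => (hasSum_fintype _).summable, ?_⟩
    have heq : (fun n : ℕ => ∑' k : Fin (n + 1), F21 z ⟨n, k⟩)
        = fun n : ℕ => z ^ (n + 2) * (Hh2 (n + 1) / ((n : ℝ) + 2)) := by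
      funext n; rw [tsum_fintype, fibersum n]
    rw [heq]
    have hb : Summable (fun n : ℕ => (((n + 1 : ℕ)) : ℝ) ^ 1 * z ^ (n + 1)) :=
      (summable_nat_add_iff (f := fun n : ℕ => (n : ℝ) ^ 1 * z ^ n) 1).mpr (summable_pow_mul_geometric_of_norm_lt_one 1
        (by rw [Real.norm_eq_abs, abs_of_pos h0]; exact h1))
    apply Summable.of_nonneg_of_le ?_ ?_ hb
    · intro n
      have := Hh2_nonneg (n + 1)
      positivity
    · intro n
      have h2' : (1:ℝ) ≤ ((n : ℝ) + 2) := by nlinarith [Nat.cast_nonneg (α := ℝ) n]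
      have hle1 : Hh2 (n + 1) / ((n : ℝ) + 2) ≤ (n : ℝ) + 1 := by
        calc Hh2 (n + 1) / ((n : ℝ) + 2) ≤ Hh2 (n + 1) :=
              div_le_self (Hh2_nonneg _) h2'
          _ ≤ ((n + 1 : ℕ) : ℝ) := Hh2_le (n + 1)
          _ = (n : ℝ) + 1 := by push_cast; ring
      have hz2 : z ^ (n + 2) ≤ z ^ (n + 1) :=
        pow_le_pow_of_le_one (le_of_lt h0) (le_of_lt h1) (by omega)
      calc z ^ (n + 2) * (Hh2 (n + 1) / ((n : ℝ) + 2))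
          ≤ z ^ (n + 1) * ((n : ℝ) + 1) := by
            apply mul_le_mul hz2 hle1 ?_ (by positivity)
            have := Hh2_nonneg (n + 1)
            positivity
        _ = (((n + 1 : ℕ)) : ℝ) ^ 1 * z ^ (n + 1) := by push_cast; ring
  have htsum : HasSum (F21 z) (Li21 z) := by
    have h1' : ∑' x, F21 z x = Li21 z := by
      rw [← hF]
      exact pairEquiv.tsum_eq (fun p : {q : ℕ+ × ℕ+ // q.1 < q.2} =>
        z ^ ((p.1.2 : ℕ)) / (((p.1.1 : ℕ) : ℝ) ^ 2 * ((p.1.2 : ℕ) : ℝ)))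
    exact h1' ▸ hsummableF.hasSum
  have hsig : HasSum (fun n : ℕ => z ^ (n + 2) * (Hh2 (n + 1) / ((n : ℝ) + 2))) (Li21 z) := by
    refine htsum.sigma fun n => ?_
    rw [← fibersum n]
    exact hasSum_fintype _
  have hshift : (fun n : ℕ => (fun N : ℕ => z ^ (N + 1) * (Hh2 N / ((N : ℝ) + 1))) (n + 1))
      = fun n : ℕ => z ^ (n + 2) * (Hh2 (n + 1) / ((n : ℝ) + 2)) := by
    funext n; push_cast; ring_nf
  have hfin := (hasSum_nat_add_iff
    (f := fun N : ℕ => z ^ (N + 1) * (Hh2 N / ((N : ℝ) + 1))) 1).mp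
    (by rw [hshift]; exact hsig)
  simpa [Hh2] using hfin

lemma ee_shift (n : ℕ) :
    ee (n + 2) = ∑ j ∈ Finset.range (n + 1), Hh (j + 1) / ((j : ℝ) + 2) := by
  rw [ee, Finset.sum_range_succ']
  have h0 : Hh 0 = 0 := by simp [Hh]
  rw [h0]
  simp only [Nat.cast_zero, zero_add, zero_div, add_zero]
  refine Finset.sum_congr rfl fun i _ => ?_
  push_cast
  ring_nf

noncomputable def F111 (z : ℝ) (x : Σ n : ℕ, Σ j : Fin (n + 1), Fin ((j : ℕ) + 1)) : ℝ :=
  z ^ (x.1 + 3) / (((((x.2.2 : ℕ) + 1 : ℕ)) : ℝ) * ((((x.2.1 : ℕ) + 2 : ℕ)) : ℝ)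
    * (((x.1 + 3 : ℕ)) : ℝ))

lemma hasSum_Li111 {z : ℝ} (h0 : 0 < z) (h1 : z < 1) :
    HasSum (fun N : ℕ => z ^ (N + 1) * (ee N / ((N : ℝ) + 1))) (Li111 z) := by
  have hF : (fun t : {s : ℕ+ × ℕ+ × ℕ+ // s.1 < s.2.1 ∧ s.2.1 < s.2.2} =>
      z ^ ((t.1.2.2 : ℕ)) /
        (((t.1.1 : ℕ) : ℝ) * ((t.1.2.1 : ℕ) : ℝ) * ((t.1.2.2 : ℕ) : ℝ))) ∘ tripleEquiv
      = F111 z := by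
    funext x
    simp only [Function.comp, tripleEquiv, Equiv.coe_fn_mk, F111]
    rfl
  have hFnonneg : ∀ x, 0 ≤ F111 z x := fun x => by
    unfold F111
    apply div_nonneg (pow_nonneg h0.le _) (by positivity)
  have innersum : ∀ (n : ℕ) (j : Fin (n + 1)),
      (∑ k : Fin ((j : ℕ) + 1), F111 z ⟨n, j, k⟩)
        = z ^ (n + 3) * (Hh ((j : ℕ) + 1) / ((((j : ℕ) : ℝ) + 2) * ((n : ℝ) + 3))) := by
    intro n j
    have step : (∑ k : Fin ((j : ℕ) + 1), F111 z ⟨n, j, k⟩)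
        = ∑ i ∈ Finset.range ((j : ℕ) + 1),
            z ^ (n + 3) / ((((i + 1 : ℕ)) : ℝ) * ((((j : ℕ) + 2 : ℕ)) : ℝ)
              * (((n + 3 : ℕ)) : ℝ)) :=
      Fin.sum_univ_eq_sum_range
        (fun i => z ^ (n + 3) / ((((i + 1 : ℕ)) : ℝ) * ((((j : ℕ) + 2 : ℕ)) : ℝ)
          * (((n + 3 : ℕ)) : ℝ))) ((j : ℕ) + 1)
    rw [step, Hh, Finset.sum_div, Finset.mul_sum]
    refine Finset.sum_congr rfl fun i _ => ?_
    push_cast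
    field_simp
  have fibersum : ∀ n : ℕ, (∑ y : Σ j : Fin (n + 1), Fin ((j : ℕ) + 1), F111 z ⟨n, y⟩)
      = z ^ (n + 3) * (ee (n + 2) / ((n : ℝ) + 3)) := by
    intro n
    rw [← Finset.univ_sigma_univ, Finset.sum_sigma]
    have step : ∀ j : Fin (n + 1), (∑ k ∈ Finset.univ, F111 z ⟨n, j, k⟩)
        = z ^ (n + 3) * (Hh ((j : ℕ) + 1) / ((((j : ℕ) : ℝ) + 2) * ((n : ℝ) + 3))) :=
      innersum n
    rw [Finset.sum_congr rfl fun j _ => step j]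
    have step2 : (∑ j : Fin (n + 1),
        z ^ (n + 3) * (Hh ((j : ℕ) + 1) / ((((j : ℕ) : ℝ) + 2) * ((n : ℝ) + 3))))
        = ∑ i ∈ Finset.range (n + 1),
            z ^ (n + 3) * (Hh (i + 1) / ((((i : ℕ) : ℝ) + 2) * ((n : ℝ) + 3))) :=
      Fin.sum_univ_eq_sum_range
        (fun i => z ^ (n + 3) * (Hh (i + 1) / ((((i : ℕ) : ℝ) + 2) * ((n : ℝ) + 3)))) (n + 1)
    rw [step2, ee_shift, Finset.sum_div, Finset.mul_sum]
    refine Finset.sum_congr rfl fun i _ => ?_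
    field_simp
  have hsummableF : Summable (F111 z) := by
    rw [summable_sigma_of_nonneg hFnonneg]
    refine ⟨fun n => (hasSum_fintype _).summable, ?_⟩
    have heq : (fun n : ℕ => ∑' y : Σ j : Fin (n + 1), Fin ((j : ℕ) + 1), F111 z ⟨n, y⟩)
        = fun n : ℕ => z ^ (n + 3) * (ee (n + 2) / ((n : ℝ) + 3)) := by
      funext n; rw [tsum_fintype, fibersum n]
    rw [heq]
    have hb : Summable (fun n : ℕ => (((n + 2 : ℕ)) : ℝ) ^ 2 * z ^ (n + 2)) :=
      (summable_nat_add_iff (f := fun n : ℕ => (n : ℝ) ^ 2 * z ^ n) 2).mpr (summable_pow_mul_geometric_of_norm_lt_one 2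
        (by rw [Real.norm_eq_abs, abs_of_pos h0]; exact h1))
    apply Summable.of_nonneg_of_le ?_ ?_ hb
    · intro n
      have := ee_nonneg (n + 2)
      positivity
    · intro n
      have h3' : (1:ℝ) ≤ ((n : ℝ) + 3) := by nlinarith [Nat.cast_nonneg (α := ℝ) n]
      have hle1 : ee (n + 2) / ((n : ℝ) + 3) ≤ ((n : ℝ) + 2) ^ 2 := by
        calc ee (n + 2) / ((n : ℝ) + 3) ≤ ee (n + 2) :=
              div_le_self (ee_nonneg _) h3'
          _ ≤ ((n + 2 : ℕ) : ℝ) * ((n + 2 : ℕ) : ℝ) := ee_le (n + 2)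
          _ = ((n : ℝ) + 2) ^ 2 := by push_cast; ring
      have hz2 : z ^ (n + 3) ≤ z ^ (n + 2) :=
        pow_le_pow_of_le_one (le_of_lt h0) (le_of_lt h1) (by omega)
      calc z ^ (n + 3) * (ee (n + 2) / ((n : ℝ) + 3))
          ≤ z ^ (n + 2) * (((n : ℝ) + 2) ^ 2) := by
            apply mul_le_mul hz2 hle1 ?_ (by positivity)
            have := ee_nonneg (n + 2)
            positivity
        _ = (((n + 2 : ℕ)) : ℝ) ^ 2 * z ^ (n + 2) := by push_cast; ring
  have htsum : HasSum (F111 z) (Li111 z) := by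
    have h1' : ∑' x, F111 z x = Li111 z := by
      rw [← hF]
      exact tripleEquiv.tsum_eq (fun t : {s : ℕ+ × ℕ+ × ℕ+ // s.1 < s.2.1 ∧ s.2.1 < s.2.2} =>
        z ^ ((t.1.2.2 : ℕ)) /
          (((t.1.1 : ℕ) : ℝ) * ((t.1.2.1 : ℕ) : ℝ) * ((t.1.2.2 : ℕ) : ℝ)))
    exact h1' ▸ hsummableF.hasSum
  have hsig : HasSum (fun n : ℕ => z ^ (n + 3) * (ee (n + 2) / ((n : ℝ) + 3))) (Li111 z) := by
    refine htsum.sigma fun n => ?_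
    rw [← fibersum n]
    exact hasSum_fintype _
  have hshift : (fun n : ℕ => (fun N : ℕ => z ^ (N + 1) * (ee N / ((N : ℝ) + 1))) (n + 2))
      = fun n : ℕ => z ^ (n + 3) * (ee (n + 2) / ((n : ℝ) + 3)) := by
    funext n; push_cast; ring_nf
  have hfin := (hasSum_nat_add_iff
    (f := fun N : ℕ => z ^ (N + 1) * (ee N / ((N : ℝ) + 1))) 2).mp
    (by rw [hshift]; exact hsig)
  have he0 : ee 0 = 0 := by simp [ee]
  have he1 : ee 1 = 0 := by simp [ee, Hh]
  simpa [Finset.sum_range_succ, he0, he1] using hfin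

lemma hasSum_Li3 {z : ℝ} (h0 : 0 < z) (h1 : z < 1) :
    HasSum (fun n : ℕ => z ^ (n + 1) / ((n : ℝ) + 1) ^ 3) (Li 3 z) := by
  have hs : Summable (fun n : ℕ => z ^ (n + 1) / ((n : ℝ) + 1) ^ 3) := by
    apply Summable.of_nonneg_of_le (fun n => by positivity) (fun n => ?_)
      (summable_geometric_of_lt_one h0.le h1)
    calc z ^ (n + 1) / ((n : ℝ) + 1) ^ 3 ≤ z ^ (n + 1) :=
          div_le_self (by positivity)
            (one_le_pow₀ (by linarith [Nat.cast_nonneg (α := ℝ) n]))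
      _ ≤ z ^ n := pow_le_pow_of_le_one h0.le h1.le (by omega)
  exact hs.hasSum

lemma hasSum_LHS {z : ℝ} (h0 : 0 < z) (h1 : z < 1 / 2) :
    HasSum (fun N : ℕ => z ^ (N + 1) *
      (∑ n ∈ Finset.range (N + 1), ((-1 : ℝ) ^ n * (N.choose n) / ((n : ℝ) + 1) ^ 3)))
      (-Li 3 (z / (z - 1))) := by
  have hz1 : (0:ℝ) < 1 - z := by linarith
  have hzlt : |z| < 1 := by rw [abs_of_pos h0]; linarith
  have hw : z / (z - 1) = -(z / (1 - z)) := by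
    rw [show z - 1 = -(1 - z) by ring, div_neg]
  set g : ℕ × ℕ → ℝ := fun p =>
    ((-1 : ℝ) ^ (p.1 + 1) * z ^ (p.1 + 1) / ((p.1 : ℝ) + 1) ^ 3) *
      ((((p.2 + p.1).choose p.1 : ℕ) : ℝ) * z ^ p.2) with hgdef
  have hbin : ∀ n : ℕ, HasSum (fun m : ℕ => (((m + n).choose n : ℕ) : ℝ) * z ^ m)
      (1 / (1 - z) ^ (n + 1)) := fun n =>
    hasSum_choose_mul_geometric_of_norm_lt_one n (by rwa [Real.norm_eq_abs])
  have hfib : ∀ n : ℕ, HasSum (fun m => g (n, m))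
      ((z / (z - 1)) ^ (n + 1) / ((n : ℝ) + 1) ^ 3) := by
    intro n
    have h := (hbin n).mul_left ((-1 : ℝ) ^ (n + 1) * z ^ (n + 1) / ((n : ℝ) + 1) ^ 3)
    have e : (z / (z - 1)) ^ (n + 1) / ((n : ℝ) + 1) ^ 3
        = ((-1 : ℝ) ^ (n + 1) * z ^ (n + 1) / ((n : ℝ) + 1) ^ 3) * (1 / (1 - z) ^ (n + 1)) := by
      rw [hw, neg_pow, div_pow]
      ring
    rw [e]; exact h
  have habs : ∀ p : ℕ × ℕ, |g p| =
      (z ^ (p.1 + 1) / ((p.1 : ℝ) + 1) ^ 3) *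
        ((((p.2 + p.1).choose p.1 : ℕ) : ℝ) * z ^ p.2) := by
    intro p
    have hn1 : (0:ℝ) < ((p.1 : ℝ) + 1) ^ 3 := by positivity
    rw [hgdef]
    rw [abs_mul, abs_mul, abs_div, abs_mul, abs_pow (-1 : ℝ), abs_neg, abs_one, one_pow,
      one_mul, abs_pow, abs_of_pos h0, abs_of_pos hn1, Nat.abs_cast, abs_pow, abs_of_pos h0]
  have habs_fib : ∀ n : ℕ, HasSum (fun m => |g (n, m)|)
      ((z ^ (n + 1) / ((n : ℝ) + 1) ^ 3) * (1 / (1 - z) ^ (n + 1))) := by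
    intro n
    have heq : (fun m => |g (n, m)|) = fun m : ℕ =>
        (z ^ (n + 1) / ((n : ℝ) + 1) ^ 3) * ((((m + n).choose n : ℕ) : ℝ) * z ^ m) :=
      funext fun m => habs (n, m)
    rw [heq]
    exact (hbin n).mul_left _
  have hrow : Summable (fun n : ℕ => ∑' m, |g (n, m)|) := by
    have heq : (fun n : ℕ => ∑' m, |g (n, m)|)
        = fun n : ℕ => (z / (1 - z)) ^ (n + 1) / ((n : ℝ) + 1) ^ 3 := by
      funext n
      rw [(habs_fib n).tsum_eq, div_pow]
      ring
    rw [heq]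
    have hr0 : 0 ≤ z / (1 - z) := by positivity
    have hr1 : z / (1 - z) < 1 := by rw [div_lt_one hz1]; linarith
    apply Summable.of_nonneg_of_le (fun n => by positivity) (fun n => ?_)
      (summable_geometric_of_lt_one hr0 hr1)
    calc (z / (1 - z)) ^ (n + 1) / ((n : ℝ) + 1) ^ 3 ≤ (z / (1 - z)) ^ (n + 1) :=
          div_le_self (by positivity)
            (one_le_pow₀ (by linarith [Nat.cast_nonneg (α := ℝ) n]))
      _ ≤ (z / (1 - z)) ^ n := pow_le_pow_of_le_one hr0 hr1.le (by omega)
  have hAbsSummable : Summable (fun p : ℕ × ℕ => |g p|) :=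
    (summable_prod_of_nonneg (fun p => abs_nonneg _)).mpr
      ⟨fun n => (habs_fib n).summable, hrow⟩
  have hg : Summable g := summable_abs_iff.mp hAbsSummable
  have htsum : ∑' p, g p = Li 3 (z / (z - 1)) := by
    rw [Summable.tsum_prod' hg (fun n => (hfib n).summable)]
    exact tsum_congr fun n => (hfib n).tsum_eq
  have hgsum : HasSum g (Li 3 (z / (z - 1))) := htsum ▸ hg.hasSum
  have hcomp : HasSum (g ∘ (Finset.HasAntidiagonal.sigmaAntidiagonalEquivProd (A := ℕ)))
      (Li 3 (z / (z - 1))) := (Equiv.hasSum_iff _).mpr hgsum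
  have hfiber_eq : ∀ N : ℕ, (∑ c : (Finset.HasAntidiagonal.antidiagonal N : Finset (ℕ × ℕ)), g ↑c)
      = -(z ^ (N + 1) *
        (∑ n ∈ Finset.range (N + 1), ((-1 : ℝ) ^ n * (N.choose n) / ((n : ℝ) + 1) ^ 3))) := by
    intro N
    rw [Finset.sum_coe_sort, Finset.Nat.sum_antidiagonal_eq_sum_range_succ_mk,
      Finset.mul_sum, ← Finset.sum_neg_distrib]
    refine Finset.sum_congr rfl fun i hi => ?_
    have hiN : i ≤ N := Nat.lt_succ_iff.mp (Finset.mem_range.mp hi)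
    have hpow : z ^ (i + 1) * z ^ (N - i) = z ^ (N + 1) := by
      rw [← pow_add]; congr 1; omega
    rw [hgdef]
    calc ((-1 : ℝ) ^ (i + 1) * z ^ (i + 1) / ((i : ℝ) + 1) ^ 3) *
          ((((N - i + i).choose i : ℕ) : ℝ) * z ^ (N - i))
        = (z ^ (i + 1) * z ^ (N - i)) *
            ((-1 : ℝ) ^ (i + 1) * (((N - i + i).choose i : ℕ) : ℝ) / ((i : ℝ) + 1) ^ 3) := by
          ring
      _ = z ^ (N + 1) *
            ((-1 : ℝ) ^ (i + 1) * ((N.choose i : ℕ) : ℝ) / ((i : ℝ) + 1) ^ 3) := by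
          rw [hpow, Nat.sub_add_cancel hiN]
      _ = -(z ^ (N + 1) * ((-1 : ℝ) ^ i * (N.choose i) / ((i : ℝ) + 1) ^ 3)) := by
          rw [pow_succ]; ring
  have hsig : HasSum (fun N : ℕ => -(z ^ (N + 1) *
      (∑ n ∈ Finset.range (N + 1), ((-1 : ℝ) ^ n * (N.choose n) / ((n : ℝ) + 1) ^ 3))))
      (Li 3 (z / (z - 1))) := by
    refine hcomp.sigma fun N => ?_
    have h := hasSum_fintype (fun c : (Finset.HasAntidiagonal.antidiagonal N : Finset (ℕ × ℕ)) => g ↑c)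
    rw [hfiber_eq N] at h
    exact h
  have := hsig.neg
  simpa [neg_neg] using this

/-- Trilogarithm at `z/(z−1)` in terms of (multiple) polylogarithms at `z`. -/
theorem neg_trilog_div (z : ℝ) (h0 : 0 < z) (h1 : z < 1 / 2) :
    -Li 3 (z / (z - 1)) = Li 3 z + Li111 z + Li12 z + Li21 z := by
  have h1' : z < 1 := by linarith
  have hA := hasSum_Li3 h0 h1'
  have hB := hasSum_Li111 h0 h1'
  have hC := hasSum_Li12 h0 h1'
  have hD := hasSum_Li21 h0 h1'
  have hRHS := ((hA.add hB).add hC).add hD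
  have hL := hasSum_LHS h0 h1
  have hfun : (fun N : ℕ => z ^ (N + 1) *
      (∑ n ∈ Finset.range (N + 1), ((-1 : ℝ) ^ n * (N.choose n) / ((n : ℝ) + 1) ^ 3)))
      = fun N : ℕ => z ^ (N + 1) / ((N : ℝ) + 1) ^ 3
          + z ^ (N + 1) * (ee N / ((N : ℝ) + 1))
          + z ^ (N + 1) * (Hh N / ((N : ℝ) + 1) ^ 2)
          + z ^ (N + 1) * (Hh2 N / ((N : ℝ) + 1)) := by
    funext N
    rw [coeff_id N]
    ring
  rw [hfun] at hL
  exact hL.unique hRHS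
end

section
/- Duality formula for multiple zeta values of the form ζ(1,…,1,2): for every integer k ≥ 2, one has ∑_{0<n₁<⋯<n_{k−1}} 1/(n₁·n₂·⋯·n_{k−2}·n_{k−1}²) = ζ(k), where the sum is over strictly increasing (k−1)-tuples of positive integers, the first k−2 of which occur to the first power and the last of which occurs squared (for k = 2 this reads ∑_{n≥1} 1/n² = ζ(2); for k = 3 this is Euler's relation ζ(1,2) = ζ(3)). -/
open Nat Filter
open scoped ENNReal

private noncomputable def gg (n p : ℕ) : ℝ := (p ! * n ! : ℝ) / (n * (n + p)!)


private lemma gg_sub (n : ℕ) (hn : 1 ≤ n) (p : ℕ) :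
    gg n p - gg n (p+1) = (p ! * n ! : ℝ) / ((n + p + 1)!) := by
  unfold gg
  have h1 : ((n + (p+1))! : ℝ) = (n + p + 1) * (n + p)! := by
    have : n + (p+1) = (n+p) + 1 := by ring
    rw [this, Nat.factorial_succ]; push_cast; ring
  have h2 : ((p+1)! : ℝ) = (p+1) * p ! := by rw [Nat.factorial_succ]; push_cast; ring
  have hnp : ((n+p)! : ℝ) ≠ 0 := by positivity
  have hn0 : (n : ℝ) ≠ 0 := by positivity
  have h3 : ((n + p + 1)! : ℝ) = (n + p + 1) * (n + p)! := by
    rw [Nat.factorial_succ]; push_cast; ring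
  rw [h1, h2, h3]
  have hnp1 : ((n:ℝ) + p + 1) ≠ 0 := by positivity
  field_simp
  ring

private lemma gg_nonneg (n p : ℕ) : 0 ≤ gg n p := by unfold gg; positivity

private lemma gg_le (n : ℕ) (hn : 1 ≤ n) (p : ℕ) : gg n p ≤ (n ! : ℝ) / (p + 1) := by
  unfold gg
  have h1 : ((p+1)! : ℕ) ≤ (n + p)! := Nat.factorial_le (by omega)
  have h2 : (((p+1)! : ℕ) : ℝ) ≤ ((n+p)! : ℝ) := by exact_mod_cast h1
  have h3 : ((p:ℝ)+1) * p ! ≤ ((n+p)! : ℝ) := by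
    rw [show ((p:ℝ)+1) * p ! = (((p+1)! : ℕ) : ℝ) by rw [Nat.factorial_succ]; push_cast; ring]
    exact h2
  have hn1 : (1:ℝ) ≤ n := by exact_mod_cast hn
  calc (p ! * n ! : ℝ) / (n * (n + p)!) ≤ (p ! * n ! : ℝ) / (1 * ((p+1) * p !)) := by
        apply div_le_div_of_nonneg_left (by positivity) (by positivity)
        apply mul_le_mul hn1 h3 (by positivity) (by positivity) |>.trans_eq rfl
    _ = (n ! : ℝ) / (p+1) := by
        have : (p ! : ℝ) ≠ 0 := by positivity
        field_simp
  
private lemma gg_tendsto (n : ℕ) (hn : 1 ≤ n) (m : ℕ) :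
    Tendsto (fun N : ℕ => gg n (m + N)) atTop (nhds 0) := by
  apply squeeze_zero (f := fun N : ℕ => gg n (m+N)) (g := fun N : ℕ => (n ! : ℝ)/(N+1)) (fun N => gg_nonneg n (m+N))
  · intro N
    calc gg n (m+N) ≤ (n ! : ℝ) / ((m + N : ℕ) + 1) := gg_le n hn (m+N)
      _ ≤ (n ! : ℝ) / (N+1) := by
          apply div_le_div_of_nonneg_left (by positivity) (by positivity) (by push_cast; linarith)
  · have := (tendsto_const_div_atTop_nhds_zero_nat (n ! : ℝ)).comp (tendsto_add_atTop_nat 1)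
    have heq : ((fun n_1 : ℕ => (n ! : ℝ) / ↑n_1) ∘ fun a => a + 1) = fun N : ℕ => (n ! : ℝ) / (↑N + 1) := by
      funext N; simp [Function.comp]
    rwa [heq] at this

private lemma star_real (n m : ℕ) (hn : 1 ≤ n) :
    HasSum (fun i : ℕ => ((m+i)! * n ! : ℝ) / ((n+m+1+i)!))
      ((m ! * n ! : ℝ) / (n * (n + m)!)) := by
  have hfg : ∀ i : ℕ, ((m+i)! * n ! : ℝ) / ((n+m+1+i)!) = gg n (m+i) - gg n (m+i+1) := by
    intro i
    rw [show n+m+1+i = n+(m+i)+1 by omega, gg_sub n hn (m+i)]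
  have hbound : ∀ i : ℕ, ((m+i)! * n ! : ℝ) / ((n+m+1+i)!) ≤ (n ! : ℝ) / ((i+1)^2) := by
    intro i
    have h1 : ((i+1)^2 * (m+i)! : ℕ) ≤ (n+m+1+i)! := by
      calc ((i+1)^2 * (m+i)! : ℕ) ≤ (m+i+2) * ((m+i+1) * (m+i)!) := by
            rw [pow_two]; rw [← mul_assoc]
            apply Nat.mul_le_mul (Nat.mul_le_mul (by omega) (by omega)) (le_refl _)
        _ = (m+i+2)! := by rw [Nat.factorial_succ, Nat.factorial_succ]
        _ ≤ (n+m+1+i)! := Nat.factorial_le (by omega)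
    have h2 : (((i:ℝ)+1)^2 * (m+i)!) ≤ ((n+m+1+i)! : ℝ) := by
      calc (((i:ℝ)+1)^2 * (m+i)!) = (((i+1)^2 * (m+i)! : ℕ) : ℝ) := by push_cast; ring
        _ ≤ _ := by exact_mod_cast h1
    rw [div_le_div_iff₀ (by positivity) (by positivity)]
    calc ((m+i)! * n ! : ℝ) * (i+1)^2 = n ! * (((i:ℝ)+1)^2 * (m+i)!) := by push_cast; ring
      _ ≤ (n ! : ℝ) * ((n+m+1+i)!) := by
          apply mul_le_mul_of_nonneg_left h2 (by positivity)
  have hsummable : Summable (fun i : ℕ => ((m+i)! * n ! : ℝ) / ((n+m+1+i)!)) := by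
    apply Summable.of_nonneg_of_le (fun i => by positivity) hbound
    have h0 : Summable (fun i : ℕ => (1:ℝ) / (i:ℝ)^2) := Real.summable_one_div_nat_pow.2 (by norm_num)
    have h1 : Summable (fun i : ℕ => (1:ℝ) / ((i:ℝ)+1)^2) := by
      have := (summable_nat_add_iff 1).2 h0
      simpa [Nat.cast_add] using this
    have := h1.mul_left (n ! : ℝ)
    simpa [div_eq_mul_inv, mul_assoc] using this
  have hS := hsummable.hasSum
  have htend1 := hS.tendsto_sum_nat
  have htend2 : Tendsto (fun N : ℕ => ∑ i ∈ Finset.range N, ((m+i)! * n ! : ℝ) / ((n+m+1+i)!))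
      atTop (nhds (gg n m)) := by
    have heq : ∀ N : ℕ, ∑ i ∈ Finset.range N, ((m+i)! * n ! : ℝ) / ((n+m+1+i)!)
        = gg n m - gg n (m + N) := by
      intro N
      rw [show (∑ i ∈ Finset.range N, ((m+i)! * n ! : ℝ) / ((n+m+1+i)!))
          = ∑ i ∈ Finset.range N, (gg n (m+i) - gg n (m+(i+1))) from
        Finset.sum_congr rfl (fun i _ => by rw [hfg i]; rfl)]
      have := Finset.sum_range_sub' (fun i => gg n (m+i)) N
      simpa using this
    simp_rw [heq]
    have := (gg_tendsto n hn m)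
    have h2 := Filter.Tendsto.sub (tendsto_const_nhds (x := gg n m)) this
    simpa using h2
  have : (∑' i : ℕ, ((m+i)! * n ! : ℝ) / ((n+m+1+i)!)) = gg n m :=
    tendsto_nhds_unique htend1 htend2
  rw [show ((m ! * n ! : ℝ) / (n * (n + m)!)) = gg n m from rfl, ← this]
  exact hsummable.hasSum

private lemma natdiv (a b : ℕ) (hb : 0 < b) :
    ((a : ℝ≥0∞)) / (b : ℝ≥0∞) = ENNReal.ofReal ((a : ℝ) / (b : ℝ)) := by
  rw [ENNReal.ofReal_div_of_pos (by exact_mod_cast hb), ENNReal.ofReal_natCast,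
    ENNReal.ofReal_natCast]

private lemma star_ennreal (n m : ℕ) (hn : 1 ≤ n) :
    ∑' i : ℕ, (((m+i)! * n ! : ℕ) : ℝ≥0∞) / (((n+m+1+i)! : ℕ) : ℝ≥0∞)
      = ((m ! * n ! : ℕ) : ℝ≥0∞) / ((n * (n+m)! : ℕ) : ℝ≥0∞) := by
  have hs := star_real n m hn
  have hsum := hs.summable
  calc ∑' i : ℕ, (((m+i)! * n ! : ℕ) : ℝ≥0∞) / (((n+m+1+i)! : ℕ) : ℝ≥0∞)
      = ∑' i : ℕ, ENNReal.ofReal (((m+i)! * n ! : ℝ)/((n+m+1+i)! : ℝ)) := by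
        apply tsum_congr; intro i
        rw [natdiv _ _ (Nat.factorial_pos _)]
        push_cast; ring_nf
    _ = ENNReal.ofReal (∑' i : ℕ, ((m+i)! * n ! : ℝ)/((n+m+1+i)! : ℝ)) := by
        rw [ENNReal.ofReal_tsum_of_nonneg (fun i => by positivity) hsum]
    _ = ENNReal.ofReal ((m ! * n ! : ℝ) / (n * (n + m)!)) := by rw [hs.tsum_eq]
    _ = ((m ! * n ! : ℕ) : ℝ≥0∞) / ((n * (n+m)! : ℕ) : ℝ≥0∞) := by
        rw [natdiv _ _ (by positivity)]
        push_cast; ring_nf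

private lemma cast_ratio_mul (a b c d : ℕ) (hb : 0 < b) (hd : 0 < d) :
    ((a:ℝ≥0∞)/b) * ((c:ℝ≥0∞)/d) = (((a*c : ℕ)) : ℝ≥0∞)/(((b*d : ℕ)) : ℝ≥0∞) := by
  rw [natdiv a b hb, natdiv c d hd, natdiv _ _ (by positivity),
    ← ENNReal.ofReal_mul (by positivity)]
  congr 1
  push_cast
  exact div_mul_div_comm _ _ _ _

private lemma cast_ratio_eq (a b c d : ℕ) (hb : 0 < b) (hd : 0 < d) (h : a * d = c * b) :
    (a:ℝ≥0∞)/(b:ℝ≥0∞) = (c:ℝ≥0∞)/(d:ℝ≥0∞) := by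
  rw [natdiv a b hb, natdiv c d hd]
  congr 1
  rw [div_eq_div_iff (by exact_mod_cast hb.ne' : (b:ℝ) ≠ 0) (by exact_mod_cast hd.ne' : (d:ℝ) ≠ 0)]
  exact_mod_cast h

private lemma cast_inv_eq (x : ℕ) : ((x:ℝ≥0∞))⁻¹ = ((1:ℕ) : ℝ≥0∞)/(x:ℝ≥0∞) := by
  simp [one_div]

private noncomputable def T (a m : ℕ) : ℝ≥0∞ :=
  ∑' j : ℕ, ((j ! * m ! : ℕ) : ℝ≥0∞) / (((j+1+m)! * (j+1)^a : ℕ) : ℝ≥0∞)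

private lemma Tstep (a m : ℕ) :
    ∑' j : ℕ, ((((m+1+j : ℕ)) : ℝ≥0∞))⁻¹ * T a (m+1+j) = T (a+1) m := by
  unfold T
  have key : ∀ j i : ℕ,
      (((m+1+j : ℕ) : ℝ≥0∞))⁻¹ * (((i ! * (m+1+j)! : ℕ) : ℝ≥0∞) / (((i+1+(m+1+j))! * (i+1)^a : ℕ) : ℝ≥0∞))
      = ((i ! : ℕ) : ℝ≥0∞)/(((i+1)! * (i+1)^a : ℕ) : ℝ≥0∞)
        * ((((m+j)! * (i+1)! : ℕ) : ℝ≥0∞) / ((((i+1)+m+1+j)! : ℕ) : ℝ≥0∞)) := by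
    intro j i
    rw [cast_inv_eq, cast_ratio_mul _ _ _ _ (by positivity) (by positivity),
      cast_ratio_mul _ _ _ _ (by positivity) (by positivity)]
    apply cast_ratio_eq _ _ _ _ (by positivity) (by positivity)
    have h1 : (m+1+j)! = (m+1+j) * (m+j)! := by
      rw [show m+1+j = (m+j)+1 by omega, Nat.factorial_succ]
    have h2 : (i+1+(m+1+j)) = (i+1)+m+1+j := by omega
    rw [h1, h2]
    ring
  calc ∑' j : ℕ, (((m+1+j:ℕ)) : ℝ≥0∞)⁻¹ *
        ∑' i : ℕ, ((i ! * (m+1+j)! : ℕ) : ℝ≥0∞) / (((i+1+(m+1+j))! * (i+1)^a : ℕ) : ℝ≥0∞)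
      = ∑' j : ℕ, ∑' i : ℕ, (((m+1+j:ℕ)) : ℝ≥0∞)⁻¹ *
          (((i ! * (m+1+j)! : ℕ) : ℝ≥0∞) / (((i+1+(m+1+j))! * (i+1)^a : ℕ) : ℝ≥0∞)) := by
        apply tsum_congr; intro j; rw [ENNReal.tsum_mul_left]
    _ = ∑' j : ℕ, ∑' i : ℕ, ((i ! : ℕ) : ℝ≥0∞)/(((i+1)! * (i+1)^a : ℕ) : ℝ≥0∞)
          * ((((m+j)! * (i+1)! : ℕ) : ℝ≥0∞) / ((((i+1)+m+1+j)! : ℕ) : ℝ≥0∞)) :=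
        tsum_congr (fun j => tsum_congr (fun i => key j i))
    _ = ∑' i : ℕ, ∑' j : ℕ, ((i ! : ℕ) : ℝ≥0∞)/(((i+1)! * (i+1)^a : ℕ) : ℝ≥0∞)
          * ((((m+j)! * (i+1)! : ℕ) : ℝ≥0∞) / ((((i+1)+m+1+j)! : ℕ) : ℝ≥0∞)) :=
        ENNReal.tsum_comm
    _ = ∑' i : ℕ, ((i ! : ℕ) : ℝ≥0∞)/(((i+1)! * (i+1)^a : ℕ) : ℝ≥0∞)
          * ((m ! * (i+1)! : ℕ) : ℝ≥0∞) / (((i+1) * ((i+1)+m)! : ℕ) : ℝ≥0∞) := by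
        apply tsum_congr; intro i
        rw [ENNReal.tsum_mul_left, star_ennreal (i+1) m (by omega)]
        rw [mul_div_assoc]
    _ = ∑' i : ℕ, ((i ! * m ! : ℕ) : ℝ≥0∞) / (((i+1+m)! * (i+1)^(a+1) : ℕ) : ℝ≥0∞) := by
        apply tsum_congr; intro i
        rw [mul_div_assoc, cast_ratio_mul _ _ _ _ (by positivity) (by positivity)]
        apply cast_ratio_eq _ _ _ _ (by positivity) (by positivity)
        have h1 : (i+1)! = (i+1) * i ! := Nat.factorial_succ i
        have h2 : ((i+1)+m) = i+1+m := by omega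
        rw [h1, h2]
        ring

private lemma Tbase (m : ℕ) :
    T 1 m = ∑' i : ℕ, ((1:ℕ) : ℝ≥0∞)/(((m+1+i)^2 : ℕ) : ℝ≥0∞) := by
  unfold T
  calc ∑' j : ℕ, ((j ! * m ! : ℕ) : ℝ≥0∞) / (((j+1+m)! * (j+1)^1 : ℕ) : ℝ≥0∞)
      = ∑' j : ℕ, ((1:ℕ) : ℝ≥0∞)/(((j+1:ℕ)) : ℝ≥0∞)
          * (((m ! * (j+1)! : ℕ) : ℝ≥0∞)/((((j+1)*((j+1)+m)! : ℕ)) : ℝ≥0∞)) := by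
        apply tsum_congr; intro j
        rw [cast_ratio_mul _ _ _ _ (by positivity) (by positivity)]
        apply cast_ratio_eq _ _ _ _ (by positivity) (by positivity)
        have h1 : (j+1)! = (j+1) * j ! := Nat.factorial_succ j
        have h2 : (j+1)+m = j+1+m := by omega
        rw [h1, h2]
        ring
    _ = ∑' j : ℕ, ((1:ℕ) : ℝ≥0∞)/(((j+1:ℕ)) : ℝ≥0∞)
          * ∑' i : ℕ, (((m+i)! * (j+1)! : ℕ) : ℝ≥0∞) / ((((j+1)+m+1+i)! : ℕ) : ℝ≥0∞) := by
        apply tsum_congr; intro j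
        rw [star_ennreal (j+1) m (by omega)]
    _ = ∑' j : ℕ, ∑' i : ℕ, ((1:ℕ) : ℝ≥0∞)/(((j+1:ℕ)) : ℝ≥0∞)
          * ((((m+i)! * (j+1)! : ℕ) : ℝ≥0∞) / ((((j+1)+m+1+i)! : ℕ) : ℝ≥0∞)) := by
        apply tsum_congr; intro j
        rw [ENNReal.tsum_mul_left]
    _ = ∑' j : ℕ, ∑' i : ℕ, (((m+i)! : ℕ) : ℝ≥0∞)/((((m+1+i)! : ℕ)) : ℝ≥0∞)
          * ((((0+j)! * (m+1+i)! : ℕ) : ℝ≥0∞) / ((((m+1+i)+0+1+j)! : ℕ) : ℝ≥0∞)) := by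
        apply tsum_congr; intro j; apply tsum_congr; intro i
        rw [cast_ratio_mul _ _ _ _ (by positivity) (by positivity),
          cast_ratio_mul _ _ _ _ (by positivity) (by positivity)]
        apply cast_ratio_eq _ _ _ _ (by positivity) (by positivity)
        have h1 : (j+1)! = (j+1) * j ! := Nat.factorial_succ j
        have h2 : (m+1+i)+0+1+j = (j+1)+m+1+i := by omega
        have h3 : 0+j = j := by omega
        rw [h1, h2, h3]
        ring
    _ = ∑' i : ℕ, ∑' j : ℕ, (((m+i)! : ℕ) : ℝ≥0∞)/((((m+1+i)! : ℕ)) : ℝ≥0∞)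
          * ((((0+j)! * (m+1+i)! : ℕ) : ℝ≥0∞) / ((((m+1+i)+0+1+j)! : ℕ) : ℝ≥0∞)) :=
        ENNReal.tsum_comm
    _ = ∑' i : ℕ, (((m+i)! : ℕ) : ℝ≥0∞)/((((m+1+i)! : ℕ)) : ℝ≥0∞)
          * (((0! * (m+1+i)! : ℕ) : ℝ≥0∞) / ((((m+1+i)*((m+1+i)+0)! : ℕ)) : ℝ≥0∞)) := by
        apply tsum_congr; intro i
        rw [ENNReal.tsum_mul_left, star_ennreal (m+1+i) 0 (by omega)]
    _ = ∑' i : ℕ, ((1:ℕ) : ℝ≥0∞)/(((m+1+i)^2 : ℕ) : ℝ≥0∞) := by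
        apply tsum_congr; intro i
        rw [cast_ratio_mul _ _ _ _ (by positivity) (by positivity)]
        apply cast_ratio_eq _ _ _ _ (by positivity) (by positivity)
        have h1 : (m+1+i)! = (m+1+i) * (m+i)! := by
          rw [show m+1+i = (m+i)+1 by omega, Nat.factorial_succ]
        have h2 : (m+1+i)+0 = m+1+i := by omega
        rw [h2, h1]
        simp [Nat.factorial]
        ring

private def natPNat : ℕ ≃ ℕ+ where
  toFun n := ⟨n+1, Nat.succ_pos n⟩
  invFun p := (p : ℕ) - 1
  left_inv n := by simp
  right_inv p := by
    apply PNat.coe_injective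
    show (p:ℕ) - 1 + 1 = (p:ℕ)
    have h0 : 1 ≤ (p:ℕ) := p.2
    omega

private def oneEquiv : {g : Fin 1 → ℕ+ // StrictMono g} ≃ ℕ+ where
  toFun f := f.1 0
  invFun p := ⟨fun _ => p, Subsingleton.strictMono _⟩
  left_inv f := by
    apply Subtype.ext
    funext i
    have : i = 0 := Subsingleton.elim _ _
    rw [this]
  right_inv p := rfl

private def chainEquiv (a : ℕ) :
    ℕ+ × {g : Fin a → ℕ+ // StrictMono g} ≃ {g : Fin (a+1) → ℕ+ // StrictMono g} where
  toFun x := ⟨Fin.cons x.1 (fun i => x.1 + x.2.1 i), by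
    intro i j hij
    revert hij
    refine Fin.cases ?_ ?_ j
    · intro h; exact absurd h (Fin.not_lt_zero i)
    · intro j' h
      refine Fin.cases ?_ ?_ i h
      · intro _
        rw [Fin.cons_zero, Fin.cons_succ]
        exact lt_add_of_pos_right _ (x.2.1 j').2 |>.trans_eq rfl |>.trans_le (le_refl _) |> id
      · intro i' hi
        rw [Fin.cons_succ, Fin.cons_succ]
        exact (add_lt_add_iff_left _).2 (x.2.2 (Fin.succ_lt_succ_iff.1 hi))⟩
  invFun h := (h.1 0, ⟨fun i => ⟨(h.1 i.succ : ℕ) - (h.1 0 : ℕ), by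
      have h1 : h.1 0 < h.1 i.succ := h.2 (Fin.succ_pos i)
      have h2 : (h.1 0 : ℕ) < (h.1 i.succ : ℕ) := h1
      omega⟩, by
    intro i j hij
    have h1 : (h.1 0 : ℕ) < (h.1 i.succ : ℕ) := h.2 (Fin.succ_pos i)
    have h2 : (h.1 i.succ : ℕ) < (h.1 j.succ : ℕ) := h.2 (Fin.succ_lt_succ_iff.2 hij)
    apply (PNat.coe_lt_coe _ _).1
    show (h.1 i.succ : ℕ) - (h.1 0 : ℕ) < (h.1 j.succ : ℕ) - (h.1 0 : ℕ)
    omega⟩)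
  left_inv x := by
    obtain ⟨p, g, hg⟩ := x
    refine Prod.ext ?_ ?_
    · simp [Fin.cons_zero]
    · apply Subtype.ext
      funext i
      apply PNat.coe_injective
      show ((p : ℕ) + (g i : ℕ)) - (p:ℕ) = (g i : ℕ)
      omega
  right_inv h := by
    obtain ⟨f, hf⟩ := h
    apply Subtype.ext
    funext i
    dsimp only
    refine Fin.cases ?_ ?_ i
    · rw [Fin.cons_zero]
    · intro j
      rw [Fin.cons_succ]
      apply PNat.coe_injective
      have h1 : (f 0 : ℕ) < (f j.succ : ℕ) := hf (Fin.succ_pos j)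
      show (f 0 : ℕ) + ((f j.succ : ℕ) - (f 0 : ℕ)) = (f j.succ : ℕ)
      omega

private noncomputable def V (a m : ℕ) : ℝ≥0∞ :=
  ∑' f : {g : Fin a → ℕ+ // StrictMono g},
    ((1:ℕ) : ℝ≥0∞) /
      ((∏ i : Fin a, (m + (f.1 i : ℕ))^(if (i:ℕ) = a - 1 then 2 else 1) : ℕ) : ℝ≥0∞)

private lemma Vbase (m : ℕ) :
    V 1 m = ∑' i : ℕ, ((1:ℕ) : ℝ≥0∞)/(((m+1+i)^2 : ℕ) : ℝ≥0∞) := by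
  unfold V
  rw [← oneEquiv.symm.tsum_eq, ← natPNat.tsum_eq]
  apply tsum_congr
  intro n
  have hA : (∏ i : Fin 1, (m + (((oneEquiv.symm (natPNat n)).1 i : ℕ)))^(if (i:ℕ) = 1 - 1 then 2 else 1))
      = (m+1+n)^2 := by
    rw [Fin.prod_univ_one]
    have h1 : (((oneEquiv.symm (natPNat n)).1 0 : ℕ)) = n + 1 := rfl
    rw [h1]
    have h2 : (((0 : Fin 1)) : ℕ) = 1 - 1 := rfl
    rw [if_pos h2]
    congr 1
    omega
  rw [hA]

private lemma Vrec (a : ℕ) (ha : 1 ≤ a) (m : ℕ) :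
    V (a+1) m = ∑' n : ℕ, ((((m+1+n : ℕ)) : ℝ≥0∞))⁻¹ * V a (m+1+n) := by
  have key : ∀ (n : ℕ) (g : {g : Fin a → ℕ+ // StrictMono g}),
      ((1:ℕ) : ℝ≥0∞) / ((∏ i : Fin (a+1), (m + (((chainEquiv a (natPNat n, g)).1 i : ℕ)))^(if (i:ℕ) = (a+1) - 1 then 2 else 1) : ℕ) : ℝ≥0∞)
      = (((m+1+n : ℕ)) : ℝ≥0∞)⁻¹ * (((1:ℕ) : ℝ≥0∞) / ((∏ i : Fin a, ((m+1+n) + (g.1 i : ℕ))^(if (i:ℕ) = a - 1 then 2 else 1) : ℕ) : ℝ≥0∞)) := by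
    intro n g
    have hprod : (∏ i : Fin (a+1), (m + (((chainEquiv a (natPNat n, g)).1 i : ℕ)))^(if (i:ℕ) = (a+1) - 1 then 2 else 1))
        = (m+1+n) * ∏ i : Fin a, ((m+1+n) + (g.1 i : ℕ))^(if (i:ℕ) = a - 1 then 2 else 1) := by
      rw [show ((chainEquiv a (natPNat n, g)).1) = Fin.cons (natPNat n) (fun i => natPNat n + g.1 i) from rfl]
      rw [Fin.prod_univ_succ]
      congr 1
      · rw [Fin.cons_zero]
        have h0 : (((0 : Fin (a+1))) : ℕ) = 0 := rfl
        rw [h0, if_neg (by omega)]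
        show (m + (n+1))^1 = m+1+n
        rw [pow_one]; omega
      · apply Finset.prod_congr rfl
        intro i _
        rw [Fin.cons_succ]
        have h1 : m + ((natPNat n + g.1 i : ℕ+) : ℕ) = (m+1+n) + (g.1 i : ℕ) := by
          rw [PNat.add_coe]
          have : ((natPNat n : ℕ+) : ℕ) = n + 1 := rfl
          rw [this]; omega
        rw [h1]
        congr 1
        have h3 : ((i.succ : Fin (a+1)) : ℕ) = (i:ℕ)+1 := Fin.val_succ i
        rw [h3]
        exact if_congr (by omega) rfl rfl
    rw [hprod, cast_inv_eq, cast_ratio_mul 1 (m+1+n) 1 _ (by omega) (by positivity)]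
  calc V (a+1) m
      = ∑' x : ℕ+ × {g : Fin a → ℕ+ // StrictMono g},
          ((1:ℕ) : ℝ≥0∞) / ((∏ i : Fin (a+1), (m + (((chainEquiv a x).1 i : ℕ)))^(if (i:ℕ) = (a+1) - 1 then 2 else 1) : ℕ) : ℝ≥0∞) := by
        unfold V
        exact ((chainEquiv a).tsum_eq _).symm
    _ = ∑' p : ℕ+, ∑' g : {g : Fin a → ℕ+ // StrictMono g},
          ((1:ℕ) : ℝ≥0∞) / ((∏ i : Fin (a+1), (m + (((chainEquiv a (p, g)).1 i : ℕ)))^(if (i:ℕ) = (a+1) - 1 then 2 else 1) : ℕ) : ℝ≥0∞) :=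
        ENNReal.tsum_prod (f := fun p g =>
          ((1:ℕ) : ℝ≥0∞) / ((∏ i : Fin (a+1), (m + (((chainEquiv a (p, g)).1 i : ℕ)))^(if (i:ℕ) = (a+1) - 1 then 2 else 1) : ℕ) : ℝ≥0∞))
    _ = ∑' n : ℕ, ∑' g : {g : Fin a → ℕ+ // StrictMono g},
          ((1:ℕ) : ℝ≥0∞) / ((∏ i : Fin (a+1), (m + (((chainEquiv a (natPNat n, g)).1 i : ℕ)))^(if (i:ℕ) = (a+1) - 1 then 2 else 1) : ℕ) : ℝ≥0∞) :=
        (natPNat.tsum_eq _).symm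
    _ = ∑' n : ℕ, ∑' g : {g : Fin a → ℕ+ // StrictMono g},
          (((m+1+n : ℕ)) : ℝ≥0∞)⁻¹ * (((1:ℕ) : ℝ≥0∞) / ((∏ i : Fin a, ((m+1+n) + (g.1 i : ℕ))^(if (i:ℕ) = a - 1 then 2 else 1) : ℕ) : ℝ≥0∞)) :=
        tsum_congr (fun n => tsum_congr (fun g => key n g))
    _ = ∑' n : ℕ, ((((m+1+n : ℕ)) : ℝ≥0∞))⁻¹ * V a (m+1+n) := by
        apply tsum_congr; intro n
        rw [ENNReal.tsum_mul_left]
        rfl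

private lemma V_eq_T : ∀ a, 1 ≤ a → ∀ m, V a m = T a m := by
  intro a ha
  induction a, ha using Nat.le_induction with
  | base => intro m; rw [Vbase, Tbase]
  | succ a ha ih =>
    intro m
    rw [Vrec a ha m]
    calc ∑' n : ℕ, ((((m+1+n : ℕ)) : ℝ≥0∞))⁻¹ * V a (m+1+n)
        = ∑' n : ℕ, ((((m+1+n : ℕ)) : ℝ≥0∞))⁻¹ * T a (m+1+n) :=
          tsum_congr (fun n => by rw [ih])
      _ = T (a+1) m := Tstep a m

/-- Duality formula `ζ(1,…,1,2) = ζ(k)` for `k ≥ 2`: the multiple zeta value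
`∑_{0<n₁<⋯<n_{k−1}} 1/(n₁⋯n_{k−2}·n_{k−1}²)` is written as a `tsum` over
strictly increasing `(k−1)`-tuples of positive integers, where only the last
entry is squared, and `ζ(k) = ∑_{n=1}^∞ 1/n^k`. -/
theorem mzv_ones_two_duality (k : ℕ) (hk : 2 ≤ k) :
    (∑' f : {g : Fin (k - 1) → ℕ+ // StrictMono g},
        (1 : ℝ) / ∏ i : Fin (k - 1),
          ((f.1 i : ℕ) : ℝ) ^ (if (i : ℕ) = k - 2 then 2 else 1))
      = ∑' n : ℕ, (1 : ℝ) / ((n : ℝ) + 1) ^ k := by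
  have hk1 : 1 ≤ k - 1 := by omega
  have hprodpos : ∀ f : {g : Fin (k-1) → ℕ+ // StrictMono g},
      0 < (∏ i : Fin (k-1), (0 + (f.1 i : ℕ))^(if (i:ℕ) = (k-1) - 1 then 2 else 1) : ℕ) :=
    fun f => Finset.prod_pos (fun i _ => pow_pos (by have := (f.1 i).pos; omega) _)
  have hterm : ∀ f : {g : Fin (k-1) → ℕ+ // StrictMono g},
      (1 : ℝ) / ∏ i : Fin (k-1), ((f.1 i : ℕ) : ℝ) ^ (if (i : ℕ) = k - 2 then 2 else 1)
      = (((1:ℕ) : ℝ≥0∞) /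
          ((∏ i : Fin (k-1), (0 + (f.1 i : ℕ))^(if (i:ℕ) = (k-1) - 1 then 2 else 1) : ℕ) : ℝ≥0∞)).toReal := by
    intro f
    rw [ENNReal.toReal_div]
    have hnatprod : (∏ i : Fin (k-1), (0 + (f.1 i : ℕ))^(if (i:ℕ) = (k-1) - 1 then 2 else 1) : ℕ)
        = ∏ i : Fin (k-1), (f.1 i : ℕ)^(if (i:ℕ) = k - 2 then 2 else 1) :=
      Finset.prod_congr rfl (fun i _ => by
        rw [Nat.zero_add]
        exact congrArg _ (if_congr (by omega) rfl rfl))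
    rw [hnatprod]
    have h1 : ((((1:ℕ)) : ℝ≥0∞)).toReal = (1:ℝ) := by simp
    have h2 : (((∏ i : Fin (k-1), (f.1 i : ℕ)^(if (i:ℕ) = k - 2 then 2 else 1) : ℕ)) : ℝ≥0∞).toReal
        = ((∏ i : Fin (k-1), (f.1 i : ℕ)^(if (i:ℕ) = k - 2 then 2 else 1) : ℕ) : ℝ) := ENNReal.toReal_natCast _
    rw [h1, h2]
    congr 1
    push_cast
    rfl
  have hVT := V_eq_T (k-1) hk1 0
  have hT : T (k-1) 0 = ∑' j : ℕ, ((1:ℕ) : ℝ≥0∞) / (((j+1)^k : ℕ) : ℝ≥0∞) := by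
    unfold T
    apply tsum_congr
    intro j
    apply cast_ratio_eq _ _ _ _ (by positivity) (by positivity)
    have h1 : (j+1)! = (j+1) * j ! := Nat.factorial_succ j
    have h2 : (j+1)^k = (j+1)^(k-1) * (j+1) := by
      rw [show k = (k-1)+1 by omega, pow_succ]
      congr 2
    rw [h2, h1]
    simp [Nat.factorial]
    ring
  calc (∑' f : {g : Fin (k - 1) → ℕ+ // StrictMono g},
        (1 : ℝ) / ∏ i : Fin (k - 1), ((f.1 i : ℕ) : ℝ) ^ (if (i : ℕ) = k - 2 then 2 else 1))
      = ∑' f : {g : Fin (k - 1) → ℕ+ // StrictMono g},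
          (((1:ℕ) : ℝ≥0∞) /
            ((∏ i : Fin (k-1), (0 + (f.1 i : ℕ))^(if (i:ℕ) = (k-1) - 1 then 2 else 1) : ℕ) : ℝ≥0∞)).toReal :=
        tsum_congr hterm
    _ = (V (k-1) 0).toReal := by
        unfold V
        rw [ENNReal.tsum_toReal_eq]
        intro f
        apply _root_.ne_of_lt
        apply ENNReal.div_lt_top (by simp)
        simp only [ne_eq, Nat.cast_eq_zero]
        exact (hprodpos f).ne'
    _ = (T (k-1) 0).toReal := by rw [hVT]
    _ = ∑' j : ℕ, (((1:ℕ) : ℝ≥0∞) / (((j+1)^k : ℕ) : ℝ≥0∞)).toReal := by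
        rw [hT, ENNReal.tsum_toReal_eq]
        intro j
        simp [ENNReal.div_eq_top]
    _ = ∑' n : ℕ, (1 : ℝ) / ((n : ℝ) + 1) ^ k := by
        apply tsum_congr
        intro j
        rw [ENNReal.toReal_div,
          ENNReal.toReal_natCast ((j+1)^k), ENNReal.toReal_natCast 1]
        push_cast
        ring
end

section
/- Absolute convergence of multiple polylogarithm series inside the unit disk: for every integer d ≥ 1, every tuple (k₁,…,k_d) of positive integers, and every complex number z with |z| < 1, the family of complex numbers z^{n_d}/(n₁^{k₁}⋯n_d^{k_d}), indexed by strictly increasing d-tuples (n₁,…,n_d) of positive integers, is summable (i.e. the multiple series ∑_{0<n₁<⋯<n_d} z^{n_d}/(n₁^{k₁}⋯n_d^{k_d}) converges absolutely). -/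
set_option maxHeartbeats 1000000

/-- Geometric series indexed by `ℕ+` is summable. -/
lemma pnat_geometric_summable {r : ℝ} (hr0 : 0 ≤ r) (hr1 : r < 1) :
    Summable (fun m : ℕ+ => r ^ (m : ℕ)) := by
  have h : Summable (fun n : ℕ => r ^ n) := summable_geometric_of_lt_one hr0 hr1
  exact h.comp_injective (fun a b hab => PNat.coe_injective hab)

/-- Summability of products of geometric factors over pi types. -/
lemma pi_geometric_summable {r : ℝ} (hr0 : 0 ≤ r) (hr1 : r < 1) :
    ∀ n : ℕ, Summable (fun f : Fin n → ℕ+ => ∏ i, r ^ ((f i : ℕ))) := by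
  intro n
  induction n with
  | zero =>
      simp only [Finset.univ_eq_empty, Finset.prod_empty]
      exact Summable.of_finite
  | succ n ih =>
      have hf : (0 : ℕ+ → ℝ) ≤ (fun m : ℕ+ => r ^ (m : ℕ)) :=
        fun m => pow_nonneg hr0 _
      have hg : (0 : (Fin n → ℕ+) → ℝ) ≤ (fun f : Fin n → ℕ+ => ∏ i, r ^ ((f i : ℕ))) :=
        fun f => Finset.prod_nonneg fun i _ => pow_nonneg hr0 _
      have key := Summable.mul_of_nonneg (pnat_geometric_summable hr0 hr1) ih hf hg
      have h2 := key.comp_injective (Fin.consEquiv (fun _ : Fin (n + 1) => ℕ+)).symm.injective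
      refine h2.congr fun f => ?_
      simp [Fin.prod_univ_succ, Fin.consEquiv, Fin.tail]

/-- Absolute convergence of the multiple polylogarithm series inside the unit
disk: for `d ≥ 1`, positive integers `k₁,…,k_d`, and `|z| < 1`, the family
`z^{n_d}/(n₁^{k₁}⋯n_d^{k_d})`, indexed by strictly increasing `d`-tuples of
positive integers, is summable. -/
theorem multiPolylog_summable (d : ℕ) (hd : 1 ≤ d) (k : Fin d → ℕ+) (z : ℂ)
    (hz : ‖z‖ < 1) :
    Summable (fun f : {g : Fin d → ℕ+ // StrictMono g} =>
      z ^ ((f.1 ⟨d - 1, by omega⟩ : ℕ+) : ℕ) /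
        ∏ i : Fin d, ((f.1 i : ℕ) : ℂ) ^ ((k i : ℕ+) : ℕ)) := by
  rcases eq_or_ne z 0 with rfl | hz0
  · have : (fun f : {g : Fin d → ℕ+ // StrictMono g} =>
        (0 : ℂ) ^ ((f.1 ⟨d - 1, by omega⟩ : ℕ+) : ℕ) /
          ∏ i : Fin d, ((f.1 i : ℕ) : ℂ) ^ ((k i : ℕ+) : ℕ)) = fun _ => 0 := by
      funext f
      rw [zero_pow (by positivity), zero_div]
    rw [this]
    exact summable_zero
  · have hr0 : 0 < ‖z‖ := norm_pos_iff.mpr hz0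
    set r : ℝ := ‖z‖ with hrdef
    set r' : ℝ := r ^ ((d : ℝ)⁻¹) with hr'
    have hd0 : (0 : ℝ) < d := by exact_mod_cast hd
    have hr'0 : 0 < r' := Real.rpow_pos_of_pos hr0 _
    have hr'1 : r' < 1 := Real.rpow_lt_one (le_of_lt hr0) hz (by positivity)
    have hsum : Summable (fun f : {g : Fin d → ℕ+ // StrictMono g} =>
        ∏ i, r' ^ ((f.1 i : ℕ))) :=
      ((pi_geometric_summable (le_of_lt hr'0) hr'1 d).subtype _)
    refine Summable.of_norm_bounded hsum fun f => ?_
    set N : ℕ := ((f.1 ⟨d - 1, by omega⟩ : ℕ+) : ℕ) with hN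
    have hnorm : ‖z ^ N / ∏ i : Fin d, ((f.1 i : ℕ) : ℂ) ^ ((k i : ℕ+) : ℕ)‖
        ≤ r ^ N := by
      rw [norm_div, norm_pow]
      have hD : (1 : ℝ) ≤ ‖∏ i : Fin d, ((f.1 i : ℕ) : ℂ) ^ ((k i : ℕ+) : ℕ)‖ := by
        rw [norm_prod]
        calc (1 : ℝ) = ∏ _i : Fin d, 1 := by simp
          _ ≤ ∏ i : Fin d, ‖((f.1 i : ℕ) : ℂ) ^ ((k i : ℕ+) : ℕ)‖ := by
              refine Finset.prod_le_prod (fun i _ => zero_le_one) fun i _ => ?_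
              rw [norm_pow]
              refine one_le_pow₀ ?_
              simp only [Complex.norm_natCast]
              exact_mod_cast (f.1 i).one_le
      exact div_le_self (pow_nonneg (norm_nonneg z) N) hD
    refine le_trans hnorm ?_
    -- r ^ N ≤ ∏ i, r' ^ (f.1 i)
    have hfle : ∀ i : Fin d, ((f.1 i : ℕ) : ℝ) ≤ (N : ℝ) := by
      intro i
      have : f.1 i ≤ f.1 ⟨d - 1, by omega⟩ := f.2.monotone (by
        rw [Fin.le_def]; simp only; omega)
      exact_mod_cast this
    have hrw : r ^ N = ∏ _i : Fin d, r ^ ((d : ℝ)⁻¹ * N) := by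
      rw [Finset.prod_const, Finset.card_univ, Fintype.card_fin,
        ← Real.rpow_natCast (r ^ ((d : ℝ)⁻¹ * N)) d, ← Real.rpow_mul hr0.le]
      rw [← Real.rpow_natCast r N]
      congr 1
      field_simp
    rw [hrw]
    refine Finset.prod_le_prod (fun i _ => (Real.rpow_pos_of_pos hr0 _).le)
      fun i _ => ?_
    have : r' ^ ((f.1 i : ℕ)) = r ^ ((d : ℝ)⁻¹ * ((f.1 i : ℕ) : ℝ)) := by
      rw [hr', ← Real.rpow_natCast (r ^ ((d : ℝ)⁻¹)) _, ← Real.rpow_mul hr0.le]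
    rw [this]
    exact Real.rpow_le_rpow_of_exponent_ge hr0 hz.le
      (by have := hfle i; nlinarith [inv_pos.mpr hd0])
end
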